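/- arXiv:1405.2531 — 12 statements merged into one kernel-verified Lean document; each statement's English description precedes it below -/
import Mathlib

section
/- Let A be a ring and T an A-module such that Ext^1_A(T, M) = 0 for every module M generated by T (i.e. every epimorphic image of a direct sum of copies of T). Then the pair (Gen(T), T°) is a torsion pair in Mod(A), where Gen(T) is the class of T-generated modules and T° = {N : Hom_A(T, N) = 0}. -/
universe u

open CategoryTheory CategoryTheory.Limits Function

variable {A : Type u} [Ring A]

/-- The class of `T`-generated modules: epimorphic images of direct sums of copies of `T`. -/
def Gen (T : ModuleCat.{u} A) : Set (ModuleCat.{u} A) :=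
  {N | ∃ (I : Type u) (f : ModuleCat.of A (I →₀ T) ⟶ N), Surjective f}

/-- `Ext¹_A(T, N) = 0`: every short exact sequence `0 → N → E → T → 0` splits. -/
def Ext1Zero (T N : ModuleCat.{u} A) : Prop :=
  ∀ (E : ModuleCat.{u} A) (i : N ⟶ E) (p : E ⟶ T),
    Injective i → Surjective p → Function.Exact ⇑i ⇑p → ∃ s : T ⟶ E, s ≫ p = 𝟙 T

/-- `T° = {N | Hom_A(T,N) = 0}`. -/
def Tcirc (T : ModuleCat.{u} A) : Set (ModuleCat.{u} A) :=
  {N | ∀ f : T ⟶ N, f = 0}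

/-- `T`-presented modules: an epimorphism from a direct sum of copies of `T` with kernel
generated by `T`. -/
def Pres (T : ModuleCat.{u} A) : Set (ModuleCat.{u} A) :=
  {N | ∃ (I : Type u) (f : ModuleCat.of A (I →₀ T) ⟶ N), Surjective f ∧
    ModuleCat.of A (LinearMap.ker f.hom) ∈ Gen T}

/-- `𝒟_σ`: modules `X` such that `Hom_A(σ, X)` is surjective. -/
def Dclass {P Q : ModuleCat.{u} A} (σ : P ⟶ Q) : Set (ModuleCat.{u} A) :=
  {X | Surjective (fun g : Q ⟶ X => σ ≫ g)}

/-- `Add T`: direct summands of direct sums of copies of `T`. -/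
def AddCl (T : ModuleCat.{u} A) : Set (ModuleCat.{u} A) :=
  {M | ∃ (I : Type u) (s : M ⟶ ModuleCat.of A (I →₀ T))
      (r : ModuleCat.of A (I →₀ T) ⟶ M), s ≫ r = 𝟙 M}

/-- If `Ext¹_A(T, M) = 0` for every `T`-generated module `M`, then `(Gen T, T°)` is a
torsion pair in `Mod A`. -/
theorem stmt_0 (T : ModuleCat.{u} A) (hExt : ∀ N ∈ Gen T, Ext1Zero T N) :
    (∀ X ∈ Gen T, ∀ Y ∈ Tcirc T, ∀ f : X ⟶ Y, f = 0) ∧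
    (∀ M : ModuleCat.{u} A, ∃ S : Submodule A M,
      ModuleCat.of A S ∈ Gen T ∧ ModuleCat.of A (M ⧸ S) ∈ Tcirc T) := by
  constructor
  · rintro X ⟨I, g, hg⟩ Y hY f
    have hcomp : (f.hom.comp g.hom) = 0 := by
      apply Finsupp.lhom_ext'
      intro i
      exact congrArg ModuleCat.Hom.hom (hY (ModuleCat.ofHom ((f.hom.comp g.hom).comp (Finsupp.lsingle i))))
    ext x
    obtain ⟨w, rfl⟩ := hg x
    exact LinearMap.congr_fun hcomp w
  · intro M
    set S : Submodule A M := ⨆ φ : T →ₗ[A] M, LinearMap.range φ with hS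
    have hSGen : ModuleCat.of A S ∈ Gen T := by
      set F : ((T →ₗ[A] M) →₀ T) →ₗ[A] M := Finsupp.lsum ℕ (fun φ => φ) with hF
      have hmem : ∀ x, F x ∈ S := by
        intro x
        rw [hF, Finsupp.lsum_apply]
        refine Submodule.finsuppSum_mem _ _ _ _ (fun φ _ => ?_)
        exact (le_iSup (fun φ : T →ₗ[A] M => LinearMap.range φ) φ) (LinearMap.mem_range_self φ _)
      refine ⟨T →ₗ[A] M, ModuleCat.ofHom (F.codRestrict S hmem), ?_⟩
      rintro ⟨s, hs⟩
      have hrange : S ≤ LinearMap.range F := by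
        rw [hS]
        refine iSup_le fun φ => ?_
        rintro _ ⟨t, rfl⟩
        exact ⟨Finsupp.single φ t, by simp [hF]⟩
      obtain ⟨x, hx⟩ := hrange hs
      exact ⟨x, Subtype.ext hx⟩
    refine ⟨S, hSGen, ?_⟩
    -- M ⧸ S ∈ Tcirc T
    · intro f
      set π : ↑M →ₗ[A] ↑M ⧸ S := S.mkQ with hπ
      let f' : ↑T →ₗ[A] ↑M ⧸ S := f.hom
      set φ : ↑M × ↑T →ₗ[A] ↑M ⧸ S :=
        π.comp (LinearMap.fst A M T) - f'.comp (LinearMap.snd A M T) with hφ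
      set E : Submodule A (↑M × ↑T) := LinearMap.ker φ with hE
      have hmemE : ∀ e : ↑M × ↑T, e ∈ E ↔ π e.1 = f' e.2 := by
        intro e
        rw [hE, LinearMap.mem_ker, hφ, LinearMap.sub_apply, sub_eq_zero]
        rfl
      set i : ModuleCat.of A S ⟶ ModuleCat.of A E :=
        ModuleCat.ofHom <| LinearMap.codRestrict E ((LinearMap.inl A M T).comp S.subtype) (by
          rintro ⟨m, hm⟩
          rw [hmemE]
          show π m = f' 0
          rw [map_zero, hπ, S.mkQ_apply, Submodule.Quotient.mk_eq_zero]
          exact hm) with hi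
      set p : ModuleCat.of A E ⟶ T := ModuleCat.ofHom ((LinearMap.snd A M T).comp E.subtype) with hp
      have hinj : Injective i := by
        rintro ⟨m, hm⟩ ⟨m', hm'⟩ h
        have := congrArg (fun e : E => (e : ↑M × ↑T).1) h
        exact Subtype.ext this
      have hsurj : Surjective p := by
        intro t
        obtain ⟨m, hm⟩ := S.mkQ_surjective (f' t)
        exact ⟨⟨(m, t), (hmemE _).2 hm⟩, rfl⟩
      have hexact : Function.Exact ⇑i ⇑p := by
        rintro ⟨⟨m, t⟩, hmt⟩
        constructor
        · intro he
          have h2 : t = 0 := he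
          have h1 : π m = f' t := (hmemE _).1 hmt
          have h3 : m ∈ S := by
            rw [← Submodule.Quotient.mk_eq_zero, ← S.mkQ_apply, ← hπ, h1, h2, map_zero]
          exact ⟨⟨m, h3⟩, Subtype.ext (by show ((m, 0) : ↑M × ↑T) = (m, t); rw [h2])⟩
        · rintro ⟨⟨m, hm⟩, hIm⟩
          show t = 0
          exact (congrArg (fun e : ↥E => ((e : ↑M × ↑T)).2) hIm).symm
      obtain ⟨s, hsplit⟩ := hExt (ModuleCat.of A S) hSGen (ModuleCat.of A E) i p hinj hsurj hexact
      set g : ↑T →ₗ[A] ↑M := (LinearMap.fst A M T).comp (E.subtype.comp s.hom) with hg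
      have hgS : LinearMap.range g ≤ S := le_iSup (fun φ : ↑T →ₗ[A] ↑M => LinearMap.range φ) g
      ext t
      let st : ↥E := s t
      have h1 : π ((st : ↑M × ↑T)).1 = f' ((st : ↑M × ↑T)).2 := (hmemE _).1 st.2
      have h2 : ((st : ↑M × ↑T)).2 = t := congrArg (fun h : T ⟶ T => h.hom t) hsplit
      have h3 : π (g t) = 0 := by
        rw [hπ, S.mkQ_apply]
        exact (Submodule.Quotient.mk_eq_zero S).2 (hgS ⟨t, rfl⟩)
      show f' t = 0
      rw [← h2, ← h1]
      exact h3
end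

section
/- Let T be an A-module such that Ext^1_A(T, Gen(T)) = 0. Then for every module M, the trace τ_T(M) (the sum of images of all homomorphisms T → M) satisfies Hom_A(T, M/τ_T(M)) = 0. -/
universe u

open CategoryTheory CategoryTheory.Limits Function

variable {A : Type u} [Ring A]

/-- If `Ext¹_A(T, Gen T) = 0`, then for every module `M` the trace
`τ_T(M) = ⨆ f : T → M, im f` satisfies `Hom_A(T, M / τ_T(M)) = 0`. -/
theorem stmt_1 (T : ModuleCat.{u} A) (hExt : ∀ X ∈ Gen T, Ext1Zero T X)
    (M : ModuleCat.{u} A) :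
    ∀ g : T ⟶ ModuleCat.of A (M ⧸ (⨆ f : T ⟶ M, LinearMap.range f.hom)), g = 0 := by
  set τ : Submodule A M := ⨆ f : T ⟶ M, LinearMap.range f.hom with hτ
  intro g
  -- τ is T-generated
  let f0 : ((T ⟶ M) →₀ T) →ₗ[A] M := Finsupp.lsum ℕ (fun f => (f.hom : T →ₗ[A] M))
  have hmem : ∀ x, f0 x ∈ τ := by
    intro x
    refine Submodule.sum_mem _ fun f _ => ?_
    exact Submodule.mem_iSup_of_mem f (LinearMap.mem_range_self f.hom _)
  let f1 : ModuleCat.of A ((T ⟶ M) →₀ T) ⟶ ModuleCat.of A τ :=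
    ModuleCat.ofHom (LinearMap.codRestrict τ f0 hmem)
  have hsurj : Surjective f1 := by
    rintro ⟨y, hy⟩
    have hex : ∃ x, f0 x = y := by
      refine Submodule.iSup_induction (motive := fun y => ∃ x, f0 x = y) _ hy ?_ ⟨0, map_zero _⟩ ?_
      · rintro f y ⟨x, rfl⟩
        exact ⟨Finsupp.single f x, by simp [f0]⟩
      · rintro a b ⟨x, rfl⟩ ⟨x', rfl⟩; exact ⟨x + x', map_add _ _ _⟩
    obtain ⟨x, rfl⟩ := hex
    exact ⟨x, Subtype.ext rfl⟩
  have hGen : ModuleCat.of A τ ∈ Gen T := ⟨(T ⟶ M), f1, hsurj⟩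
  -- pullback construction
  let gl : (T : Type u) →ₗ[A] ((M : Type u) ⧸ τ) := g.hom
  let φ : (M × T) →ₗ[A] ((M : Type u) ⧸ τ) :=
    τ.mkQ.comp (LinearMap.fst A M T) - gl.comp (LinearMap.snd A M T)
  let E : ModuleCat.{u} A := ModuleCat.of A (LinearMap.ker φ)
  have hmemE : ∀ m t, ((m, t) : M × T) ∈ LinearMap.ker φ ↔
      Submodule.Quotient.mk m = gl t := by
    intro m t
    simp [φ, LinearMap.mem_ker, sub_eq_zero]
  let i : ModuleCat.of A τ ⟶ E := ModuleCat.ofHom <|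
    LinearMap.codRestrict (LinearMap.ker φ)
      ((LinearMap.inl A M T).comp τ.subtype)
      (by rintro ⟨m, hm⟩
          refine (hmemE m 0).2 ?_
          simp [Submodule.Quotient.mk_eq_zero, hm, gl])
  let p : E ⟶ T := ModuleCat.ofHom <| (LinearMap.snd A M T).comp (LinearMap.ker φ).subtype
  have hi : Injective i := by
    rintro ⟨m, hm⟩ ⟨m', hm'⟩ h
    exact Subtype.ext (congrArg (Prod.fst ∘ Subtype.val) h)
  have hp : Surjective p := by
    intro t
    obtain ⟨m, hm⟩ := Submodule.Quotient.mk_surjective τ (gl t)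
    exact ⟨⟨(m, t), (hmemE m t).2 hm⟩, rfl⟩
  have hexact : Function.Exact ⇑i ⇑p := by
    rintro ⟨⟨m, t⟩, he⟩
    constructor
    · intro ht
      have ht' : t = 0 := ht
      subst ht'
      have hm : m ∈ τ := by
        have h0 := (hmemE m 0).1 he
        rw [map_zero] at h0
        exact (Submodule.Quotient.mk_eq_zero τ).1 h0
      exact ⟨⟨m, hm⟩, Subtype.ext rfl⟩
    · rintro ⟨⟨m', hm'⟩, h⟩
      have : t = 0 := (congrArg (Prod.snd ∘ Subtype.val) h).symm
      exact this
  obtain ⟨s, hsp⟩ := hExt _ hGen E i p hi hp hexact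
  have hst : ∀ t : T, p (s t) = t := fun t => congrArg (fun f => f.hom t) hsp
  refine ModuleCat.hom_ext (LinearMap.ext fun t => ?_)
  have h1 : Submodule.Quotient.mk ((s t).val.1) = gl ((s t).val.2) :=
    (hmemE _ _).1 (s t).2
  have h2 : (s t).val.2 = t := hst t
  have h3 : Submodule.Quotient.mk (p := τ) ((s t).val.1) = 0 := by
    rw [Submodule.Quotient.mk_eq_zero]
    exact Submodule.mem_iSup_of_mem (s ≫ ModuleCat.ofHom ((LinearMap.fst A M T).comp (LinearMap.ker φ).subtype))
      ⟨t, rfl⟩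
  rw [h2] at h1
  show gl t = 0
  rw [← h1, h3]
end

section
/- Let T be an A-module satisfying: (i) Pres(T) = Gen(T), and (ii) Ext^1_A(T, X) = 0 for all X ∈ Gen(T). Then Gen(T) equals the class of modules N such that N embeds into some module of Gen(T) and Ext^1_A(T, N) = 0. -/
universe u

open CategoryTheory CategoryTheory.Limits Function

variable {A : Type u} [Ring A]

/-- Unwrap an element of `ModuleCat.of A X` to `X` (definitional identity). -/
abbrev el {X : Type u} [AddCommGroup X] [Module A X] (x : ModuleCat.of A X) : X := x

/-- `Gen T` is closed under epimorphic images. -/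
lemma gen_of_surj {T M N : ModuleCat.{u} A} (hM : M ∈ Gen T) (g : M ⟶ N)
    (hg : Surjective g) : N ∈ Gen T := by
  obtain ⟨I, f, hf⟩ := hM
  exact ⟨I, f ≫ g, hg.comp hf⟩

/-- `Ext1Zero` transports along bijective morphisms in the second variable. -/
lemma ext1Zero_of_bij {T N N' : ModuleCat.{u} A} (e : N ⟶ N')
    (he : Function.Bijective e) (h : Ext1Zero T N) : Ext1Zero T N' := by
  intro E i p hi hp hex
  refine h E (e ≫ i) p (hi.comp he.1) hp ?_
  intro y
  rw [hex y]
  constructor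
  · rintro ⟨n', rfl⟩
    obtain ⟨n, rfl⟩ := he.2 n'
    exact ⟨n, rfl⟩
  · rintro ⟨n, rfl⟩
    exact ⟨e n, rfl⟩

/-- Key lifting lemma: maps from a direct sum of copies of `T` lift along epimorphisms
whose kernel `X` satisfies `Ext¹(T, X) = 0`. -/
lemma lift_lemma (T : ModuleCat.{u} A) {P M : ModuleCat.{u} A} (p : P ⟶ M)
    (hp : Surjective p) (hker : Ext1Zero T (ModuleCat.of A (LinearMap.ker p.hom)))
    {I : Type u} (f : ModuleCat.of A (I →₀ T) ⟶ M) :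
    ∃ g : ModuleCat.of A (I →₀ T) ⟶ P, g ≫ p = f := by
  -- for each i, lift f ∘ (single i) : T → M to a map T → P
  have key : ∀ i : I, ∃ gi : T →ₗ[A] P, ∀ t : T, p (gi t) = f (Finsupp.single i t) := by
    intro i
    set fi : T →ₗ[A] M := f.hom.comp (Finsupp.lsingle i) with hfi
    set h : P × T →ₗ[A] M :=
      (p.hom.comp (LinearMap.fst A P T)) - fi.comp (LinearMap.snd A P T) with hh
    set Q : Submodule A (P × T) := LinearMap.ker h with hQ
    have mem_iff : ∀ x : P × T, x ∈ Q ↔ p x.1 = fi x.2 := by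
      intro x
      simp [hQ, hh, sub_eq_zero]
    have hmemk : ∀ k : LinearMap.ker p.hom, (((k : P), (0 : T)) : P × T) ∈ Q := by
      intro k
      rw [mem_iff]
      simp [LinearMap.mem_ker.mp k.2]
    set ι : ModuleCat.of A (LinearMap.ker p.hom) ⟶ ModuleCat.of A Q :=
      ModuleCat.ofHom (LinearMap.codRestrict Q ((LinearMap.inl A P T).comp (LinearMap.ker p.hom).subtype)
        hmemk) with hι
    set π : ModuleCat.of A Q ⟶ T := ModuleCat.ofHom ((LinearMap.snd A P T).comp Q.subtype) with hπ
    have hιinj : Injective ι := fun a b hab =>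
      Subtype.ext (congrArg (fun x : Q => (x : P × T).1) hab)
    have hπsurj : Surjective π := by
      intro t
      obtain ⟨x, hx⟩ := hp (fi t)
      exact ⟨(⟨((x, t) : P × T), (mem_iff _).mpr hx⟩ : Q), rfl⟩
    have hexact : Function.Exact ⇑ι ⇑π := by
      intro y
      constructor
      · intro hy
        have hy2 : ((el y : Q) : P × T).2 = 0 := hy
        have hmem : ((el y : Q) : P × T).1 ∈ LinearMap.ker p.hom := by
          have h3 := (mem_iff _).mp (el y : Q).2
          rw [hy2] at h3
          simpa using h3
        exact ⟨⟨((el y : Q) : P × T).1, hmem⟩,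
          Subtype.ext (Prod.ext rfl hy2.symm)⟩
      · rintro ⟨k, rfl⟩
        rfl
    obtain ⟨s, hs⟩ := hker (ModuleCat.of A Q) ι π hιinj hπsurj hexact
    refine ⟨(LinearMap.fst A P T).comp (Q.subtype.comp s.hom),
      fun t => ?_⟩
    have hst : ((el (s t) : Q) : P × T).2 = t := LinearMap.congr_fun (congrArg ModuleCat.Hom.hom hs) t
    have hm := (mem_iff _).mp (el (s t) : Q).2
    show p ((el (s t) : Q) : P × T).1 = f (Finsupp.single i t)
    rw [hm, hst]
    show f ((Finsupp.lsingle i) t) = f (Finsupp.single i t)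
    rw [Finsupp.lsingle_apply]
  choose gi hgi using key
  refine ⟨ModuleCat.ofHom (Finsupp.lsum ℕ gi), ?_⟩
  apply ModuleCat.hom_ext
  show (p.hom.comp (Finsupp.lsum ℕ gi)) = f.hom
  apply Finsupp.lhom_ext
  intro i t
  simpa using hgi i t

/-- If `T` is quasitilting (`Pres T = Gen T` and `Ext¹(T, Gen T) = 0`), then `Gen T` equals
the class of modules embedding into a `T`-generated module and with `Ext¹_A(T, -) = 0`. -/
theorem stmt_2 (T : ModuleCat.{u} A) (hpres : Pres T = Gen T)
    (hExt : ∀ X ∈ Gen T, Ext1Zero T X) :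
    Gen T = {N | (∃ M ∈ Gen T, ∃ i : N ⟶ M, Injective i) ∧ Ext1Zero T N} := by
  ext N
  constructor
  · intro hN
    exact ⟨⟨N, hN, 𝟙 N, fun a b h => h⟩, hExt N hN⟩
  · rintro ⟨⟨M, hM, ι, hι⟩, hN⟩
    -- quotient M / N
    set R : Submodule A M := LinearMap.range ι.hom with hR
    set π : M ⟶ ModuleCat.of A (M ⧸ R) := ModuleCat.ofHom R.mkQ with hπdef
    have hπ : Surjective π := R.mkQ_surjective
    have hMQ : ModuleCat.of A (M ⧸ R) ∈ Gen T := gen_of_surj hM π hπ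
    rw [← hpres] at hMQ
    obtain ⟨K, ψ, hψ, hkψ⟩ := hMQ
    -- pullback P of π and ψ
    set h : M × (ModuleCat.of A (K →₀ T)) →ₗ[A] ModuleCat.of A (M ⧸ R) :=
      (π.hom.comp (LinearMap.fst A M (ModuleCat.of A (K →₀ T)))) -
        ψ.hom.comp (LinearMap.snd A M (ModuleCat.of A (K →₀ T))) with hh
    set Q : Submodule A (M × (ModuleCat.of A (K →₀ T))) := LinearMap.ker h with hQ
    have mem_iff : ∀ x : M × (ModuleCat.of A (K →₀ T)), x ∈ Q ↔ π x.1 = ψ x.2 := by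
      intro x
      simp [hQ, hh, sub_eq_zero]
    set P := ModuleCat.of A Q with hP
    set fstP : P ⟶ M := ModuleCat.ofHom ((LinearMap.fst A M (ModuleCat.of A (K →₀ T))).comp Q.subtype) with hfstP
    set sndP : P ⟶ (ModuleCat.of A (K →₀ T)) := ModuleCat.ofHom ((LinearMap.snd A M (ModuleCat.of A (K →₀ T))).comp Q.subtype) with hsndP
    -- fstP is surjective
    have hfstsurj : Surjective fstP := by
      intro m
      obtain ⟨t, ht⟩ := hψ (π m)
      exact ⟨(⟨((m, t) : M × (ModuleCat.of A (K →₀ T))), (mem_iff _).mpr ht.symm⟩ : Q), rfl⟩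
    -- ker fstP ≅ ker ψ
    have hincl_mem : ∀ k : LinearMap.ker ψ.hom, (((0 : M), (k : (ModuleCat.of A (K →₀ T)))) : M × (ModuleCat.of A (K →₀ T))) ∈ Q := by
      intro k
      rw [mem_iff]
      simp [LinearMap.mem_ker.mp k.2]
    set incl : ModuleCat.of A (LinearMap.ker ψ.hom) →ₗ[A] P :=
      LinearMap.codRestrict Q ((LinearMap.inr A M (ModuleCat.of A (K →₀ T))).comp (LinearMap.ker ψ.hom).subtype)
        hincl_mem with hincl
    have hincl_ker : ∀ k : LinearMap.ker ψ.hom, incl k ∈ LinearMap.ker fstP.hom := fun k =>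
      LinearMap.mem_ker.mpr rfl
    set e1 : ModuleCat.of A (LinearMap.ker ψ.hom) ⟶ ModuleCat.of A (LinearMap.ker fstP.hom) :=
      ModuleCat.ofHom (LinearMap.codRestrict _ incl hincl_ker) with he1
    have he1bij : Function.Bijective e1 := by
      constructor
      · intro a b hab
        exact Subtype.ext (congrArg
          (fun x : LinearMap.ker fstP.hom => ((el (x : P) : Q) : M × (ModuleCat.of A (K →₀ T))).2) hab)
      · rintro ⟨y, hy⟩
        have hy1 : ((el y : Q) : M × (ModuleCat.of A (K →₀ T))).1 = 0 := hy
        have hmem : ((el y : Q) : M × (ModuleCat.of A (K →₀ T))).2 ∈ LinearMap.ker ψ.hom := by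
          have h3 := (mem_iff _).mp (el y : Q).2
          rw [hy1] at h3
          simp only [map_zero] at h3
          exact LinearMap.mem_ker.mpr h3.symm
        refine ⟨⟨((el y : Q) : M × (ModuleCat.of A (K →₀ T))).2, hmem⟩, ?_⟩
        apply Subtype.ext
        apply Subtype.ext
        exact Prod.ext hy1.symm rfl
    have hExtkerfst : Ext1Zero T (ModuleCat.of A (LinearMap.ker fstP.hom)) :=
      ext1Zero_of_bij e1 he1bij (hExt _ hkψ)
    -- sndP is surjective
    have hsndsurj : Surjective sndP := by
      intro t
      obtain ⟨m, hm⟩ := hπ (ψ t)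
      exact ⟨(⟨((m, t) : M × (ModuleCat.of A (K →₀ T))), (mem_iff _).mpr hm⟩ : Q), rfl⟩
    -- ker sndP ≅ N
    have hιπ : ∀ n : N, π (ι n) = 0 := by
      intro n
      show R.mkQ (ι n) = 0
      rw [Submodule.mkQ_apply, Submodule.Quotient.mk_eq_zero]
      exact ⟨n, rfl⟩
    have heN_mem : ∀ n : N, ((ι n : M), (0 : (ModuleCat.of A (K →₀ T)))) ∈ Q := by
      intro n
      rw [mem_iff]
      simp [hιπ n]
    set eN0 : N →ₗ[A] P :=
      LinearMap.codRestrict Q ((LinearMap.inl A M (ModuleCat.of A (K →₀ T))).comp ι.hom)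
        heN_mem with heN0
    have heN0_ker : ∀ n : N, eN0 n ∈ LinearMap.ker sndP.hom := fun n =>
      LinearMap.mem_ker.mpr rfl
    set eN : N ⟶ ModuleCat.of A (LinearMap.ker sndP.hom) :=
      ModuleCat.ofHom (LinearMap.codRestrict _ eN0 heN0_ker) with heN
    have heNbij : Function.Bijective eN := by
      constructor
      · intro a b hab
        exact hι (congrArg
          (fun x : LinearMap.ker sndP.hom => ((el (x : P) : Q) : M × (ModuleCat.of A (K →₀ T))).1) hab)
      · rintro ⟨y, hy⟩
        have hy2 : ((el y : Q) : M × (ModuleCat.of A (K →₀ T))).2 = 0 := hy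
        have hmem : ((el y : Q) : M × (ModuleCat.of A (K →₀ T))).1 ∈ R := by
          have h3 := (mem_iff _).mp (el y : Q).2
          rw [hy2] at h3
          simp only [map_zero] at h3
          rw [hπdef] at h3
          exact (Submodule.Quotient.mk_eq_zero R).mp h3
        obtain ⟨n, hn⟩ := hmem
        refine ⟨n, ?_⟩
        apply Subtype.ext
        apply Subtype.ext
        exact Prod.ext hn hy2.symm
    have hExtkersnd : Ext1Zero T (ModuleCat.of A (LinearMap.ker sndP.hom)) :=
      ext1Zero_of_bij eN heNbij hN
    -- split the sequence 0 → N → P → T^(K) → 0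
    obtain ⟨s, hs⟩ := lift_lemma T sndP hsndsurj hExtkersnd (𝟙 (ModuleCat.of A (K →₀ T)))
    have hs' : ∀ t : (ModuleCat.of A (K →₀ T)), sndP (s t) = t := fun t => LinearMap.congr_fun (congrArg ModuleCat.Hom.hom hs) t
    -- retraction r : P → N
    set eNequiv := LinearEquiv.ofBijective eN.hom
      heNbij with heNe
    have hr_mem : ∀ x : P, ((LinearMap.id : P →ₗ[A] P) -
        s.hom.comp sndP.hom) x ∈ LinearMap.ker sndP.hom := by
      intro x
      rw [LinearMap.mem_ker]
      show sndP (x - s (sndP x)) = 0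
      rw [map_sub, hs' (sndP x), sub_self]
    set ρ : P →ₗ[A] LinearMap.ker sndP.hom :=
      LinearMap.codRestrict _ ((LinearMap.id : P →ₗ[A] P) -
        s.hom.comp sndP.hom) hr_mem with hρ
    set r : P ⟶ N := ModuleCat.ofHom (eNequiv.symm.toLinearMap.comp ρ) with hrdef
    have hrsurj : Surjective r := by
      intro n
      refine ⟨((el (eN n) : LinearMap.ker sndP.hom) : P), ?_⟩
      have h2 : sndP ((el (eN n) : LinearMap.ker sndP.hom) : P) = 0 :=
        (el (eN n) : LinearMap.ker sndP.hom).2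
      show eNequiv.symm (ρ _) = n
      have h3 : ρ ((el (eN n) : LinearMap.ker sndP.hom) : P) = el (eN n) := by
        apply Subtype.ext
        show ((el (eN n) : LinearMap.ker sndP.hom) : P) -
          s (sndP ((el (eN n) : LinearMap.ker sndP.hom) : P)) = _
        rw [h2, map_zero, sub_zero]
      rw [h3]
      exact eNequiv.symm_apply_apply n
    -- P ∈ Gen T : lift the epi onto M and add the kernel part
    obtain ⟨I, fM, hfM⟩ := hM
    obtain ⟨g, hg⟩ := lift_lemma T fstP hfstsurj hExtkerfst fM
    have hg' : ∀ x, fstP (g x) = fM x := fun x => LinearMap.congr_fun (congrArg ModuleCat.Hom.hom hg) x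
    obtain ⟨J, fJ, hfJ⟩ := hkψ
    -- the combined surjection (I ⊕ J →₀ T) → P
    set v : (ModuleCat.of A (I →₀ T) × ModuleCat.of A (J →₀ T)) →ₗ[A] P :=
      g.hom.comp
          (LinearMap.fst A (ModuleCat.of A (I →₀ T)) (ModuleCat.of A (J →₀ T))) +
        (incl.comp fJ.hom).comp
          (LinearMap.snd A (ModuleCat.of A (I →₀ T)) (ModuleCat.of A (J →₀ T))) with hv
    have hvsurj : Surjective v := by
      intro x
      obtain ⟨a, ha⟩ := hfM (fstP x)
      have hker : fstP (x - g a) = 0 := by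
        rw [map_sub, hg' a, ha, sub_self]
      have h1 : ((el (x - g a) : Q) : M × (ModuleCat.of A (K →₀ T))).1 = 0 := hker
      have hmemψ : ((el (x - g a) : Q) : M × (ModuleCat.of A (K →₀ T))).2 ∈ LinearMap.ker ψ.hom := by
        have h3 := (mem_iff _).mp (el (x - g a) : Q).2
        rw [h1] at h3
        simp only [map_zero] at h3
        exact LinearMap.mem_ker.mpr h3.symm
      obtain ⟨b, hb⟩ := hfJ ⟨_, hmemψ⟩
      refine ⟨(a, b), ?_⟩
      show g a + incl (fJ b) = x
      rw [hb]
      have h4 : incl (⟨_, hmemψ⟩ : LinearMap.ker ψ.hom) = x - g a := by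
        apply Subtype.ext
        exact Prod.ext h1.symm rfl
      rw [h4]
      abel
    set u : ModuleCat.of A ((I ⊕ J) →₀ T) ⟶ P :=
      ModuleCat.ofHom (v.comp ((Finsupp.sumFinsuppLEquivProdFinsupp A).toLinearMap :
        ((I ⊕ J) →₀ T) →ₗ[A] ((I →₀ T) × (J →₀ T)))) with hu
    have husurj : Surjective u :=
      hvsurj.comp (Finsupp.sumFinsuppLEquivProdFinsupp A).surjective
    exact ⟨I ⊕ J, u ≫ r, hrsurj.comp husurj⟩
end

section
/- Let T be an A-module such that Gen(T) equals the class of all modules N that embed into a T-generated module and satisfy Ext^1_A(T, N) = 0. Then Gen(T) ⊆ Pres(T), i.e. every T-generated module is T-presented. -/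
universe u

open CategoryTheory CategoryTheory.Limits Function

variable {A : Type u} [Ring A]

theorem ker_ext1 (T M F : ModuleCat.{u} A) (u : F ⟶ M)
    (huniv : ∀ g : T ⟶ M, ∃ t : T ⟶ F, t ≫ u = g)
    (hF : Ext1Zero T F) :
    Ext1Zero T (ModuleCat.of A (LinearMap.ker u.hom)) := by
  classical
  intro E i p hi hp hex
  let K : Submodule A F := LinearMap.ker u.hom
  let j : K →ₗ[A] F := K.subtype
  let hmap : K →ₗ[A] F × E := j.prod (-i.hom)
  let N : Submodule A (F × E) := LinearMap.range hmap
  let G := ModuleCat.of A ((F × E) ⧸ N)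
  have quotEq : ∀ z w : F × E, z - w ∈ N → N.mkQ z = N.mkQ w :=
    fun z w hzw => (Submodule.Quotient.eq N).mpr hzw
  have quotEq' : ∀ z w : F × E, N.mkQ z = N.mkQ w → z - w ∈ N :=
    fun z w hzw => (Submodule.Quotient.eq N).mp hzw
  have hpi : ∀ k : K, p (i k) = 0 := by
    intro k; exact (hex (i k)).mpr ⟨k, rfl⟩
  have hq0 : ∀ x ∈ N, (p.hom.comp (LinearMap.snd A F E)) x = 0 := by
    rintro x ⟨k, rfl⟩
    show p (-(i k)) = 0
    rw [map_neg, hpi k, neg_zero]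
  have hv0 : ∀ x ∈ N, (u.hom.comp (LinearMap.fst A F E)) x = 0 := by
    rintro x ⟨k, rfl⟩
    simpa [hmap, j] using k.2
  let q : G ⟶ T := ModuleCat.ofHom (N.liftQ (p.hom.comp (LinearMap.snd A F E)) hq0)
  let v : G ⟶ M := ModuleCat.ofHom (N.liftQ (u.hom.comp (LinearMap.fst A F E)) hv0)
  let a : F ⟶ G := ModuleCat.ofHom (N.mkQ.comp (LinearMap.inl A F E))
  let b : E →ₗ[A] G := N.mkQ.comp (LinearMap.inr A F E)
  have hainj : Injective a := by
    intro x y hxy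
    have hmem : ((x, (0:E)) : F × E) - (y, 0) ∈ N := quotEq' (x, 0) (y, 0) hxy
    obtain ⟨k, hk⟩ := hmem
    have hk1 : j k = x - y := congrArg Prod.fst hk
    have hk2 : -(i k) = (0:E) - 0 := congrArg Prod.snd hk
    have hik : i k = 0 := by simpa using hk2
    have hk0 : k = 0 := hi (by simpa using hik)
    have : x - y = 0 := by rw [← hk1, hk0]; simp [j]
    exact sub_eq_zero.mp this
  have hqsurj : Surjective q := by
    intro y
    obtain ⟨e, he⟩ := hp y
    exact ⟨b e, he⟩
  have hexaq : Function.Exact ⇑a ⇑q := by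
    intro y
    constructor
    · intro hy
      obtain ⟨⟨x, e⟩, rfl⟩ := Submodule.Quotient.mk_surjective N y
      have hpe : p e = 0 := hy
      obtain ⟨k, hk⟩ := (hex e).mp hpe
      refine ⟨x + j k, ?_⟩
      refine quotEq (x + j k, 0) (x, e) ⟨k, ?_⟩
      have : hmap k = (j k, -(i k)) := rfl
      rw [this, hk]
      ext <;> simp
    · rintro ⟨x, rfl⟩
      show p 0 = 0
      simp
  obtain ⟨s, hs⟩ := hF G a q hainj hqsurj hexaq
  obtain ⟨t, ht⟩ := huniv (s ≫ v)
  let d : T →ₗ[A] G := s.hom - a.hom.comp t.hom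
  have hdv : ∀ y, v (d y) = 0 := by
    intro y
    have h2 : u (t y) = v (s y) := LinearMap.congr_fun (congrArg ModuleCat.Hom.hom ht) y
    show v (s y - a (t y)) = 0
    have h1 : v (a (t y)) = u (t y) := rfl
    rw [map_sub, h1, h2, sub_self]
  have hdrange : ∀ y, d y ∈ LinearMap.range b := by
    intro y
    obtain ⟨⟨x, e⟩, hxe⟩ := Submodule.Quotient.mk_surjective N (d y)
    have hux : u x = 0 := by rw [← hdv y, ← hxe]; rfl
    refine ⟨e + i ⟨x, hux⟩, ?_⟩
    have heq : N.mkQ (0, e + i ⟨x, hux⟩) = N.mkQ (x, e) := by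
      refine quotEq _ _ ⟨-⟨x, hux⟩, ?_⟩
      have : hmap (-⟨x, hux⟩) = (j (-⟨x, hux⟩), -(i (-⟨x, hux⟩))) := rfl
      rw [this]
      ext <;> simp [j]
    show N.mkQ (0, e + i ⟨x, hux⟩) = d y
    rw [heq]; exact hxe
  have hbinj : Injective b := by
    intro e e' he
    have hmem : (((0:F), e) : F × E) - (0, e') ∈ N := quotEq' (0, e) (0, e') he
    obtain ⟨k, hk⟩ := hmem
    have hk1 : j k = (0:F) - 0 := congrArg Prod.fst hk
    have hk0 : k = 0 := Subtype.ext (by simpa [j] using hk1)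
    have hk2 : -(i k) = e - e' := congrArg Prod.snd hk
    rw [hk0] at hk2
    simp at hk2
    exact sub_eq_zero.mp hk2.symm
  let eb := LinearEquiv.ofInjective b hbinj
  let w : T →ₗ[A] E := eb.symm.toLinearMap.comp (d.codRestrict (LinearMap.range b) hdrange)
  have hbw : ∀ y, b (w y) = d y := by
    intro y
    have h3 : eb (eb.symm ⟨d y, hdrange y⟩) = ⟨d y, hdrange y⟩ := eb.apply_symm_apply _
    exact congrArg Subtype.val h3
  refine ⟨ModuleCat.ofHom w, ?_⟩
  ext y
  show p (w y) = y
  have h1 : q (b (w y)) = p (w y) := rfl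
  have h2 : q (d y) = y := by
    show q (s y - a (t y)) = y
    have hqa : q (a (t y)) = 0 := by show p 0 = 0; simp
    have hqs : q (s y) = y := LinearMap.congr_fun (congrArg ModuleCat.Hom.hom hs) y
    rw [map_sub, hqa, hqs, sub_zero]
  rw [← h1, hbw, h2]

/-- If `Gen T` equals the class of modules embedding into a `T`-generated module with
`Ext¹_A(T, -) = 0`, then every `T`-generated module is `T`-presented. -/
theorem stmt_3 (T : ModuleCat.{u} A)
    (h : Gen T = {N | (∃ M ∈ Gen T, ∃ i : N ⟶ M, Injective i) ∧ Ext1Zero T N}) :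
    Gen T ⊆ Pres T := by
  classical
  intro M hM
  let F : ModuleCat.{u} A := ModuleCat.of A ((T ⟶ M) →₀ T)
  let u : F ⟶ M := ModuleCat.ofHom (Finsupp.lsum ℕ (fun g : T ⟶ M => g.hom))
  have hsingle : ∀ (g : T ⟶ M) (x : T), u (Finsupp.single g x) = g x := by
    intro g x
    exact Finsupp.lsum_single _ _ _ _
  have huniv : ∀ g : T ⟶ M, ∃ t : T ⟶ F, t ≫ u = g := by
    intro g
    refine ⟨ModuleCat.ofHom (Finsupp.lsingle g : T →ₗ[A] ((T ⟶ M) →₀ T)), ?_⟩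
    ext x
    exact hsingle g x
  have husurj : Surjective u := by
    obtain ⟨I, f, hf⟩ := hM
    have key : ∀ x : (I →₀ T), ∃ y : ((T ⟶ M) →₀ T), u y = f x := by
      intro x
      induction x using Finsupp.induction₂ with
      | zero => exact ⟨0, by simp⟩
      | add_single i t x _ _ ih =>
        obtain ⟨y, hy⟩ := ih
        let g0 : T ⟶ M := ModuleCat.ofHom (f.hom.comp (Finsupp.lsingle i))
        refine ⟨y + Finsupp.single g0 t, ?_⟩
        rw [map_add, hy, hsingle, map_add]
        rfl
    intro m
    obtain ⟨x, rfl⟩ := hf m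
    exact key x
  have hFgen : F ∈ Gen T := ⟨T ⟶ M, 𝟙 F, surjective_id⟩
  have hFext : Ext1Zero T F := (h ▸ hFgen).2
  have hKext : Ext1Zero T (ModuleCat.of A (LinearMap.ker u.hom)) :=
    ker_ext1 T M F u huniv hFext
  have hKgen : ModuleCat.of A (LinearMap.ker u.hom) ∈ Gen T := by
    rw [h]
    refine ⟨⟨F, hFgen, (ModuleCat.ofHom (LinearMap.ker u.hom).subtype :
      ModuleCat.of A (LinearMap.ker u.hom) ⟶ F), Submodule.injective_subtype _⟩, hKext⟩
  exact ⟨T ⟶ M, u, husurj, hKgen⟩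
end

section
/- Every silting module is quasitilting: if T is an A-module with Gen(T) = 𝒟_σ for some projective presentation σ of T, then Pres(T) = Gen(T) and Ext^1_A(T, X) = 0 for all X ∈ Gen(T). -/
universe u

open CategoryTheory CategoryTheory.Limits Function

variable {A : Type u} [Ring A]

/-- The universal map from a direct sum of copies of `T` indexed by `T ⟶ M` to `M`. -/
noncomputable def univMap (T M : ModuleCat.{u} A) :
    ModuleCat.of A ((T ⟶ M) →₀ T) ⟶ M :=
  ModuleCat.ofHom (Finsupp.lsum ℕ (fun f : T ⟶ M => f.hom) : ((T ⟶ M) →₀ T) →ₗ[A] M)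

lemma univMap_single (T M : ModuleCat.{u} A) (f : T ⟶ M) (t : T) :
    univMap T M (Finsupp.single f t) = f t :=
  by exact Finsupp.lsum_single ℕ (fun f : T ⟶ M => f.hom) f t

lemma univMap_surjective (T M : ModuleCat.{u} A) (hM : M ∈ Gen T) :
    Surjective (univMap T M) := by
  obtain ⟨J, f, hf⟩ := hM
  intro m
  obtain ⟨x, rfl⟩ := hf m
  induction x using Finsupp.induction_linear with
  | zero => exact ⟨0, by simp⟩
  | add a b ha hb =>
      obtain ⟨ya, hya⟩ := ha
      obtain ⟨yb, hyb⟩ := hb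
      exact ⟨ya + yb, by simp [hya, hyb]⟩
  | single j t =>
      refine ⟨Finsupp.single (ModuleCat.ofHom (Finsupp.lsingle j : T →ₗ[A] (J →₀ T)) ≫ f) t, ?_⟩
      rw [univMap_single]
      rfl

/-- The key step: the kernel of a "universal" map onto `M` is again in `𝒟_σ`. -/
lemma ker_mem_D {P Q : ModuleCat.{u} A} (σ : P ⟶ Q) (M : ModuleCat.{u} A)
    (u : ModuleCat.of A ((cokernel σ ⟶ M) →₀ ((cokernel σ : ModuleCat.{u} A) : Type u)) ⟶ M)
    (husingle : ∀ (v : cokernel σ ⟶ M) (t : ((cokernel σ : ModuleCat.{u} A) : Type u)), u (Finsupp.single v t) = v t)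
    (hD : ModuleCat.of A ((cokernel σ ⟶ M) →₀ ((cokernel σ : ModuleCat.{u} A) : Type u)) ∈ Dclass σ) :
    ModuleCat.of A (LinearMap.ker u.hom) ∈ Dclass σ := by
  intro h
  obtain ⟨g, hg⟩ := hD (h ≫ ModuleCat.ofHom ((LinearMap.ker u.hom).subtype :
    LinearMap.ker u.hom →ₗ[A] ((cokernel σ ⟶ M) →₀ ((cokernel σ : ModuleCat.{u} A) : Type u))))
  replace hg : σ ≫ g = h ≫ ModuleCat.ofHom ((LinearMap.ker u.hom).subtype :
    LinearMap.ker u.hom →ₗ[A] ((cokernel σ ⟶ M) →₀ ((cokernel σ : ModuleCat.{u} A) : Type u))) := hg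
  have hw : σ ≫ (g ≫ u) = 0 := by
    apply ModuleCat.hom_ext
    apply LinearMap.ext
    intro x
    show u (g (σ x)) = 0
    have h1 : g (σ x) = (h x).1 := ConcreteCategory.congr_hom hg x
    rw [h1]
    exact (h x).2
  have hπv : cokernel.π σ ≫ cokernel.desc σ (g ≫ u) hw = g ≫ u := cokernel.π_desc σ (g ≫ u) hw
  set v : cokernel σ ⟶ M := cokernel.desc σ (g ≫ u) hw with hv
  set L : cokernel σ ⟶ ModuleCat.of A ((cokernel σ ⟶ M) →₀ ((cokernel σ : ModuleCat.{u} A) : Type u)) :=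
    ModuleCat.ofHom (Finsupp.lsingle v : (cokernel σ : ModuleCat.{u} A) →ₗ[A] ((cokernel σ ⟶ M) →₀ ((cokernel σ : ModuleCat.{u} A) : Type u)))
    with hL
  have hker : ∀ x : Q, u ((g - cokernel.π σ ≫ L) x) = 0 := by
    intro x
    have hx : (g - cokernel.π σ ≫ L) x = g x - L ((cokernel.π σ) x) := rfl
    have hL1 : u (L ((cokernel.π σ) x)) = v ((cokernel.π σ) x) := husingle v _
    have h2 : u (g x) = v ((cokernel.π σ) x) := (ConcreteCategory.congr_hom hπv x).symm
    rw [hx, map_sub, hL1, h2, sub_self]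
  refine ⟨ModuleCat.ofHom (LinearMap.codRestrict (LinearMap.ker u.hom)
    ((g - cokernel.π σ ≫ L : Q ⟶ _).hom : Q →ₗ[A] ((cokernel σ ⟶ M) →₀ ((cokernel σ : ModuleCat.{u} A) : Type u))) hker :
    Q →ₗ[A] LinearMap.ker u.hom), ?_⟩
  apply ModuleCat.hom_ext
  apply LinearMap.ext
  intro x
  apply Subtype.ext
  show (g - cokernel.π σ ≫ L) (σ x) = (h x).1
  have h3 : g (σ x) = (h x).1 := ConcreteCategory.congr_hom hg x
  have h4 : (g - cokernel.π σ ≫ L) (σ x)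
      = g (σ x) - L ((cokernel.π σ) (σ x)) := rfl
  have h5 : (cokernel.π σ) (σ x) = 0 := ConcreteCategory.congr_hom (cokernel.condition σ) x
  rw [h4, h5, map_zero, sub_zero]
  exact h3

/-- Every silting module is quasitilting: if `Gen (coker σ) = 𝒟_σ` then
`Pres (coker σ) = Gen (coker σ)` and `Ext¹(coker σ, X) = 0` for all `X ∈ Gen (coker σ)`. -/
theorem stmt_10 {P Q : ModuleCat.{u} A} (hP : Projective P) (hQ : Projective Q)
    (σ : P ⟶ Q) (hsilt : Gen (cokernel σ) = Dclass σ) :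
    Pres (cokernel σ) = Gen (cokernel σ) ∧
    ∀ X ∈ Gen (cokernel σ), Ext1Zero (cokernel σ) X := by
  constructor
  · apply Set.Subset.antisymm
    · rintro M ⟨I, f, hf, -⟩
      exact ⟨I, f, hf⟩
    · intro M hM
      refine ⟨cokernel σ ⟶ M, univMap (cokernel σ) M, univMap_surjective _ M hM, ?_⟩
      rw [hsilt]
      refine ker_mem_D σ M (univMap (cokernel σ) M) (univMap_single _ M) ?_
      rw [← hsilt]
      exact ⟨cokernel σ ⟶ M, 𝟙 _, fun x => ⟨x, rfl⟩⟩
  · intro X hX E i p hi hp hexact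
    haveI := hQ
    haveI : Epi p := (ModuleCat.epi_iff_surjective p).mpr hp
    set q : Q ⟶ E := Projective.factorThru (cokernel.π σ) p with hq
    have hqp : q ≫ p = cokernel.π σ := Projective.factorThru_comp _ _
    have hmem : ∀ x : P, (σ ≫ q) x ∈ LinearMap.range i.hom := by
      intro x
      have h0 : p ((σ ≫ q) x) = 0 := by
        have h1 : p (q (σ x)) = (cokernel.π σ) (σ x) := ConcreteCategory.congr_hom hqp (σ x)
        have h2 : (cokernel.π σ) (σ x) = 0 := ConcreteCategory.congr_hom (cokernel.condition σ) x
        show p (q (σ x)) = 0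
        rw [h1, h2]
      obtain ⟨y, hy⟩ := (hexact _).mp h0
      exact ⟨y, hy⟩
    set e := LinearEquiv.ofInjective i.hom hi with he
    have key : ∀ z : LinearMap.range i.hom,
        i.hom (e.symm z) = (z : E) := by
      intro z
      conv_rhs => rw [← e.apply_symm_apply z]
      exact (LinearEquiv.ofInjective_apply i.hom (e.symm z)).symm
    set h : P ⟶ X := ModuleCat.ofHom (e.symm.toLinearMap ∘ₗ
      LinearMap.codRestrict (LinearMap.range i.hom) (σ ≫ q).hom hmem :
      P →ₗ[A] X) with hh
    have hhi : h ≫ i = σ ≫ q := by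
      apply ModuleCat.hom_ext
      apply LinearMap.ext
      intro x
      show i.hom (e.symm ⟨(σ ≫ q) x, hmem x⟩) = (σ ≫ q) x
      exact key ⟨(σ ≫ q) x, hmem x⟩
    have hXD : X ∈ Dclass σ := by rw [← hsilt]; exact hX
    obtain ⟨g, hg⟩ := hXD h
    replace hg : σ ≫ g = h := hg
    have hw : σ ≫ (q - g ≫ i) = 0 := by
      rw [Preadditive.comp_sub, ← Category.assoc, hg, hhi, sub_self]
    refine ⟨cokernel.desc σ (q - g ≫ i) hw, ?_⟩
    have hip : i ≫ p = 0 := by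
      apply ModuleCat.hom_ext
      apply LinearMap.ext
      intro x
      exact hexact.apply_apply_eq_zero x
    rw [← cancel_epi (cokernel.π σ), Category.comp_id, ← Category.assoc,
      cokernel.π_desc, Preadditive.sub_comp, hqp, Category.assoc, hip,
      Limits.comp_zero, sub_zero]
end

section
/- Let T be an A-module of projective dimension at most 1 which is silting with respect to a projective presentation σ: P₋₁ → P₀ and sincere (Hom_A(P,T) ≠ 0 for every nonzero projective module P). Then T is a tilting module, i.e. Gen(T) = {N : Ext^1_A(T,N) = 0}. -/
universe u

open CategoryTheory CategoryTheory.Limits Function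

variable {A : Type u} [Ring A]

section Schanuel
variable {R : Type*} [Ring R] {M N T : Type*}
  [AddCommGroup M] [Module R M] [AddCommGroup N] [Module R N]
  [AddCommGroup T] [Module R T]

theorem my_schanuel (f : M →ₗ[R] T) (g : N →ₗ[R] T)
    (hf : Surjective f) (hg : Surjective g)
    (hM : Module.Projective R M) (hN : Module.Projective R N)
    (hkg : Module.Projective R (LinearMap.ker g)) :
    Module.Projective R (LinearMap.ker f) := by
  set X : Submodule R (M × N) :=
    LinearMap.ker (f ∘ₗ LinearMap.fst R M N - g ∘ₗ LinearMap.snd R M N) with hX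
  have hmem : ∀ x : M × N, x ∈ X ↔ f x.1 = g x.2 := by
    intro x
    simp [hX, LinearMap.mem_ker, sub_eq_zero]
  let p1 : X →ₗ[R] M := (LinearMap.fst R M N) ∘ₗ X.subtype
  have hp1 : Surjective p1 := by
    intro m
    obtain ⟨n, hn⟩ := hg (f m)
    exact ⟨⟨(m, n), (hmem _).2 hn.symm⟩, rfl⟩
  obtain ⟨u, hu⟩ := Module.projective_lifting_property p1 LinearMap.id hp1
  have hu' : ∀ m, ((u m : M × N)).1 = m := fun m => LinearMap.congr_fun hu m
  -- X is projective
  have ha1mem : ∀ x : X, g (((x - u (p1 x) : X) : M × N)).2 = 0 := by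
    intro x
    have h1 : (((x - u (p1 x) : X) : M × N)).1 = 0 := by
      have := hu' (p1 x)
      simp only [Submodule.coe_sub, Prod.fst_sub, this]
      show (x : M × N).1 - _ = 0
      simp [p1, this, sub_self]
    have := (hmem _).1 (x - u (p1 x)).2
    rw [h1, map_zero] at this
    exact this.symm
  let a1 : X →ₗ[R] LinearMap.ker g :=
    LinearMap.codRestrict (LinearMap.ker g)
      ((LinearMap.snd R M N) ∘ₗ X.subtype ∘ₗ (LinearMap.id - u ∘ₗ p1))
      (fun x => by simpa using ha1mem x)
  let a : X →ₗ[R] (LinearMap.ker g × M) := LinearMap.prod a1 p1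
  let b1 : LinearMap.ker g →ₗ[R] X :=
    LinearMap.codRestrict X ((LinearMap.inr R M N) ∘ₗ (LinearMap.ker g).subtype)
      (fun k => (hmem _).2 (by simpa using (LinearMap.mem_ker.1 k.2).symm))
  let b : (LinearMap.ker g × M) →ₗ[R] X := LinearMap.coprod b1 u
  have hXp : Module.Projective R X := by
    haveI := hkg; haveI := hM
    refine Module.Projective.of_split a b (LinearMap.ext fun x => Subtype.ext ?_)
    show (((0 : M), (((x - u (p1 x) : X) : M × N)).2) + ((u (p1 x)) : M × N) : M × N)
      = (x : M × N)
    refine Prod.ext ?_ ?_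
    · show (0 : M) + (u (p1 x) : M × N).1 = (x : M × N).1
      rw [hu' (p1 x)]
      simp [p1]
    · show (((x - u (p1 x) : X) : M × N)).2 + (u (p1 x) : M × N).2 = (x : M × N).2
      simp only [Submodule.coe_sub, Prod.snd_sub]
      abel
  -- second projection
  let p2 : X →ₗ[R] N := (LinearMap.snd R M N) ∘ₗ X.subtype
  have hp2 : Surjective p2 := by
    intro n
    obtain ⟨m, hm⟩ := hf (g n)
    exact ⟨⟨(m, n), (hmem _).2 hm⟩, rfl⟩
  obtain ⟨v, hv⟩ := Module.projective_lifting_property p2 LinearMap.id hp2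
  have hv' : ∀ n, ((v n : M × N)).2 = n := fun n => LinearMap.congr_fun hv n
  let i' : LinearMap.ker f →ₗ[R] X :=
    LinearMap.codRestrict X ((LinearMap.inl R M N) ∘ₗ (LinearMap.ker f).subtype)
      (fun k => (hmem _).2 (by simpa using (LinearMap.mem_ker.1 k.2)))
  have hs'mem : ∀ x : X, f (((x - v (p2 x) : X) : M × N)).1 = 0 := by
    intro x
    have h2 : (((x - v (p2 x) : X) : M × N)).2 = 0 := by
      simp only [Submodule.coe_sub, Prod.snd_sub]
      rw [hv' (p2 x)]
      show (x : M × N).2 - (x : M × N).2 = 0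
      simp
    have := (hmem _).1 (x - v (p2 x)).2
    rw [h2, map_zero] at this
    exact this
  let s' : X →ₗ[R] LinearMap.ker f :=
    LinearMap.codRestrict (LinearMap.ker f)
      ((LinearMap.fst R M N) ∘ₗ X.subtype ∘ₗ (LinearMap.id - v ∘ₗ p2))
      (fun x => by simpa using hs'mem x)
  haveI := hXp
  refine Module.Projective.of_split i' s' (LinearMap.ext fun k => Subtype.ext ?_)
  show (((i' k - v (p2 (i' k)) : X) : M × N)).1 = (k : M)
  have hp2i : p2 (i' k) = 0 := rfl
  rw [hp2i, map_zero, sub_zero]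
  rfl
end Schanuel

/-- A sincere silting module of projective dimension at most 1 is tilting. -/
theorem stmt_12 (T : ModuleCat.{u} A)
    -- projective dimension at most 1
    (hpd : ∃ (P₁ P₀ : ModuleCat.{u} A) (_ : Projective P₁) (_ : Projective P₀)
      (ι : P₁ ⟶ P₀) (pr : P₀ ⟶ T), Injective ι ∧ Surjective pr ∧ Function.Exact ⇑ι ⇑pr)
    -- silting with respect to a projective presentation σ
    {P Q : ModuleCat.{u} A} (hP : Projective P) (hQ : Projective Q)
    (σ : P ⟶ Q) (π : Q ⟶ T) (hπ : Surjective π) (hexact : Function.Exact ⇑σ ⇑π)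
    (hsilt : Gen T = Dclass σ)
    -- sincere
    (hsincere : ∀ P' : ModuleCat.{u} A, Projective P' → (∃ x : P', x ≠ 0) →
      ∃ f : P' ⟶ T, f ≠ 0) :
    Gen T = {N | Ext1Zero T N} := by
  classical
  obtain ⟨P₁, P₀, hP₁, hP₀, ι, pr, hι, hpr, hexd⟩ := hpd
  have hQp : Module.Projective A ↑Q := by rw [IsProjective.iff_projective]; exact hQ
  have hP₀p : Module.Projective A ↑P₀ := by rw [IsProjective.iff_projective]; exact hP₀
  have hP₁p : Module.Projective A ↑P₁ := by rw [IsProjective.iff_projective]; exact hP₁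
  -- T ∈ Gen T
  have hTgen : T ∈ Gen T := by
    refine ⟨PUnit, ModuleCat.ofHom (Finsupp.lsum ℕ (fun _ => (LinearMap.id : ↑T →ₗ[A] ↑T))),
      fun t => ⟨Finsupp.single PUnit.unit t, ?_⟩⟩
    exact Finsupp.lsum_single _ _ _ _
  -- Part 1 : Gen T ⊆ Ext1Zero
  have part1 : ∀ N : ModuleCat.{u} A, N ∈ Gen T → Ext1Zero T N := by
    intro N hN E i p hi hp hexE
    rw [hsilt] at hN
    obtain ⟨φ, hφ⟩ := Module.projective_lifting_property p.hom π.hom hp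
    have hφ' : ∀ q : ↑Q, p (φ q) = π q := fun q => LinearMap.congr_fun hφ q
    have hmemr : ∀ x : ↑P, φ (σ x) ∈ LinearMap.range i.hom := by
      intro x
      have h0 : p (φ (σ x)) = 0 := by rw [hφ']; exact hexact.apply_apply_eq_zero x
      obtain ⟨n, hn⟩ := (hexE _).1 h0
      exact ⟨n, hn⟩
    set e := LinearEquiv.ofInjective i.hom hi with he
    have key : ∀ y : LinearMap.range i.hom, i (e.symm y) = (y : ↑E) :=
      fun y => congrArg Subtype.val (e.apply_symm_apply y)
    let g : ↑P →ₗ[A] ↑N :=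
      e.symm.toLinearMap ∘ₗ
        LinearMap.codRestrict (LinearMap.range i.hom)
          ((φ : ↑Q →ₗ[A] ↑E) ∘ₗ σ.hom) hmemr
    have hig : ∀ x : ↑P, i (g x) = φ (σ x) := fun x => key ⟨φ (σ x), hmemr x⟩
    obtain ⟨h, hh⟩ := hN (ModuleCat.ofHom g)
    have hh' : ∀ x : ↑P, h (σ x) = g x := fun x => congrArg (fun m => ModuleCat.Hom.hom m x) hh
    set ψ : ↑Q →ₗ[A] ↑E := (φ : ↑Q →ₗ[A] ↑E) - i.hom ∘ₗ h.hom with hψ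
    have hψker : LinearMap.ker π.hom ≤ LinearMap.ker ψ := by
      intro q hq
      obtain ⟨x, hx⟩ := (hexact q).1 hq
      have : ψ q = φ q - i (h q) := rfl
      rw [LinearMap.mem_ker, this, ← hx, hh' x, hig x, sub_self]
    set eT := π.hom.quotKerEquivOfSurjective hπ with heT
    set s : ↑T →ₗ[A] ↑E :=
      (Submodule.liftQ (LinearMap.ker π.hom) ψ hψker) ∘ₗ eT.symm.toLinearMap with hsdef
    have heTmk : ∀ q : ↑Q, eT (Submodule.Quotient.mk q) = π q := fun q => rfl
    have hs : ∀ q : ↑Q, s (π q) = φ q - i (h q) := by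
      intro q
      have h1 : eT.symm (π q) = Submodule.Quotient.mk q := by
        apply eT.injective; rw [eT.apply_symm_apply, heTmk]
      show Submodule.liftQ _ ψ hψker (eT.symm (π q)) = _
      rw [h1]
      rfl
    refine ⟨ModuleCat.ofHom s, ?_⟩
    apply ModuleCat.hom_ext
    apply LinearMap.ext
    intro t
    obtain ⟨q, rfl⟩ := hπ t
    show p (s (π q)) = π q
    rw [hs, map_sub, hφ', hexE.apply_apply_eq_zero (h q), sub_zero]
  -- σ is injective
  have hkerpr : Module.Projective A (LinearMap.ker pr.hom) := by
    have hrange : LinearMap.range ι.hom = LinearMap.ker pr.hom :=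
      (LinearMap.exact_iff.mp hexd).symm
    exact Module.Projective.of_equiv
      ((LinearEquiv.ofInjective ι.hom hι).trans (LinearEquiv.ofEq _ _ hrange))
  have hkerπ : Module.Projective A (LinearMap.ker π.hom) :=
    my_schanuel π.hom pr.hom hπ hpr hQp hP₀p hkerpr
  set σ' : ↑P →ₗ[A] LinearMap.ker π.hom :=
    LinearMap.codRestrict _ σ.hom (fun x => hexact.apply_apply_eq_zero x) with hσ'def
  have hσ'surj : Surjective σ' := by
    rintro ⟨q, hq⟩
    obtain ⟨x, hx⟩ := (hexact q).1 hq
    exact ⟨x, Subtype.ext hx⟩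
  obtain ⟨w, hw⟩ := Module.projective_lifting_property σ' LinearMap.id hσ'surj
  have hw' : ∀ k, σ' (w k) = k := fun k => LinearMap.congr_fun hw k
  have hrmem : ∀ x : ↑P, σ (x - w (σ' x)) = 0 := by
    intro x
    have h1 : σ (w (σ' x)) = σ x := congrArg Subtype.val (hw' (σ' x))
    rw [map_sub, h1, sub_self]
  set r : ↑P →ₗ[A] LinearMap.ker σ.hom :=
    LinearMap.codRestrict _ (LinearMap.id - (w ∘ₗ σ')) (fun x => by simpa using hrmem x) with hrdef
  have hkσp : Module.Projective A (LinearMap.ker σ.hom) := by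
    have hPp : Module.Projective A ↑P := by rw [IsProjective.iff_projective]; exact hP
    refine Module.Projective.of_split (LinearMap.ker σ.hom).subtype r
      (LinearMap.ext fun k => Subtype.ext ?_)
    show (k : ↑P) - w (σ' (k : ↑P)) = (k : ↑P)
    have h0 : σ' (k : ↑P) = 0 := Subtype.ext (LinearMap.mem_ker.1 k.2)
    rw [h0, map_zero, sub_zero]
  have hσinj : Injective ⇑σ := by
    rw [← LinearMap.ker_eq_bot (f := σ.hom)]
    by_contra hker
    obtain ⟨x, hx, hxne⟩ := (Submodule.ne_bot_iff _).1 hker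
    obtain ⟨f, hf⟩ := hsincere (ModuleCat.of A (LinearMap.ker σ.hom))
      ((IsProjective.iff_projective _).mp hkσp)
      ⟨⟨x, hx⟩, fun h0 => hxne (congrArg Subtype.val h0)⟩
    have hTD : T ∈ Dclass σ := hsilt ▸ hTgen
    obtain ⟨h, hh⟩ := hTD (ModuleCat.ofHom (f.hom ∘ₗ r))
    apply hf
    apply ModuleCat.hom_ext
    apply LinearMap.ext
    intro k
    set k' : ↥(LinearMap.ker σ.hom) := k with hk'
    have hrk : r (k' : ↑P) = k' := by
      apply Subtype.ext
      show (k' : ↑P) - w (σ' (k' : ↑P)) = (k' : ↑P)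
      have h0 : σ' (k' : ↑P) = 0 := Subtype.ext (LinearMap.mem_ker.1 k'.2)
      rw [h0, map_zero, sub_zero]
    have h1 : h (σ (k' : ↑P)) = f (r (k' : ↑P)) := congrArg (fun m => ModuleCat.Hom.hom m (k' : ↑P)) hh
    have h2 : σ (k' : ↑P) = 0 := LinearMap.mem_ker.1 k'.2
    rw [hrk, h2, map_zero] at h1
    exact h1.symm
  -- Part 3 : Ext1Zero ⊆ Gen T
  have part3 : ∀ N : ModuleCat.{u} A, Ext1Zero T N → N ∈ Gen T := by
    intro N hN
    rw [hsilt]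
    intro f
    set W : Submodule A (↑N × ↑Q) :=
      LinearMap.range (LinearMap.prod f.hom (-σ.hom)) with hW
    set i₀ : ↑N →ₗ[A] (↑N × ↑Q) ⧸ W := W.mkQ ∘ₗ LinearMap.inl A ↑N ↑Q with hi₀def
    set j : ↑Q →ₗ[A] (↑N × ↑Q) ⧸ W := W.mkQ ∘ₗ LinearMap.inr A ↑N ↑Q with hjdef
    have hWle : W ≤ LinearMap.ker (π.hom ∘ₗ LinearMap.snd A ↑N ↑Q) := by
      rintro y ⟨x, rfl⟩
      show π (-(σ x)) = 0
      rw [map_neg, hexact.apply_apply_eq_zero x, neg_zero]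
    set p₀ : ((↑N × ↑Q) ⧸ W) →ₗ[A] ↑T :=
      Submodule.liftQ W (π.hom ∘ₗ LinearMap.snd A ↑N ↑Q) hWle with hp₀def
    have hp₀mk : ∀ y : ↑N × ↑Q, p₀ (W.mkQ y) = π y.2 := fun y => rfl
    have hi₀ : Injective i₀ := by
      intro n m hnm
      have h0 : i₀ (n - m) = 0 := by rw [map_sub, hnm, sub_self]
      have h1 : ((n - m : ↑N), (0 : ↑Q)) ∈ W := by
        rwa [← Submodule.Quotient.mk_eq_zero]
      obtain ⟨x, hx⟩ := h1
      have hx1 : f x = n - m := congrArg Prod.fst hx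
      have hx2 : -(σ x) = 0 := congrArg Prod.snd hx
      have hx0 : x = 0 := hσinj (by rw [map_zero]; exact neg_eq_zero.1 hx2)
      rw [hx0, map_zero] at hx1
      exact sub_eq_zero.1 hx1.symm
    have hp₀ : Surjective p₀ := by
      intro t
      obtain ⟨q, rfl⟩ := hπ t
      exact ⟨j q, hp₀mk (0, q)⟩
    have hker : LinearMap.ker p₀ = LinearMap.range i₀ := by
      apply le_antisymm
      · intro y hy
        obtain ⟨z, rfl⟩ := W.mkQ_surjective y
        have hz : π z.2 = 0 := hy
        obtain ⟨x, hx⟩ := (hexact z.2).1 hz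
        refine ⟨z.1 + f x, ?_⟩
        show W.mkQ (z.1 + f x, 0) = W.mkQ z
        rw [Submodule.mkQ_apply, Submodule.mkQ_apply, Submodule.Quotient.eq]
        refine ⟨x, ?_⟩
        rw [LinearMap.prod_apply]
        refine Prod.ext ?_ ?_
        · show f x = (z.1 + f x - z.1)
          abel
        · show -(σ x) = (0 - z.2)
          rw [hx, zero_sub]
      · rintro y ⟨n, rfl⟩
        show p₀ (W.mkQ (n, 0)) = 0
        rw [hp₀mk, map_zero]
    obtain ⟨s, hs⟩ := hN (ModuleCat.of A ((↑N × ↑Q) ⧸ W)) (ModuleCat.ofHom i₀) (ModuleCat.ofHom p₀) hi₀ hp₀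
      (LinearMap.exact_iff.2 hker)
    set sl : ↑T →ₗ[A] (↑N × ↑Q) ⧸ W := s.hom with hsl
    have hs' : ∀ t : ↑T, p₀ (sl t) = t := fun t => congrArg (fun m => ModuleCat.Hom.hom m t) hs
    have hmem2 : ∀ q : ↑Q, j q - sl (π q) ∈ LinearMap.range i₀ := by
      intro q
      rw [← hker, LinearMap.mem_ker, map_sub, hs']
      show p₀ (W.mkQ (0, q)) - π q = 0
      rw [hp₀mk, sub_self]
    set e₀ := LinearEquiv.ofInjective i₀ hi₀ with he₀
    have key₀ : ∀ y : LinearMap.range i₀, i₀ (e₀.symm y) = (y : (↑N × ↑Q) ⧸ W) :=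
      fun y => congrArg Subtype.val (e₀.apply_symm_apply y)
    set ψ₂ : ↑Q →ₗ[A] (↑N × ↑Q) ⧸ W :=
      j - (sl ∘ₗ π.hom) with hψ₂
    have hmem2' : ∀ q : ↑Q, ψ₂ q ∈ LinearMap.range i₀ := fun q => hmem2 q
    let h : ↑Q →ₗ[A] ↑N :=
      e₀.symm.toLinearMap ∘ₗ LinearMap.codRestrict (LinearMap.range i₀) ψ₂ hmem2'
    refine ⟨ModuleCat.ofHom h, ?_⟩
    apply ModuleCat.hom_ext
    apply LinearMap.ext
    intro x
    apply hi₀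
    have hL : i₀ (h (σ x)) = ψ₂ (σ x) := key₀ ⟨ψ₂ (σ x), hmem2' (σ x)⟩
    have hsπσ : sl (π (σ x)) = 0 := by rw [hexact.apply_apply_eq_zero x, map_zero]
    have hψ₂σ : ψ₂ (σ x) = W.mkQ (0, σ x) := by
      show j (σ x) - sl (π (σ x)) = W.mkQ (0, σ x)
      rw [hsπσ, sub_zero]
      rfl
    show i₀ (h (σ x)) = i₀ (f x)
    rw [hL, hψ₂σ]
    show W.mkQ (0, σ x) = W.mkQ (f x, 0)
    rw [Submodule.mkQ_apply, Submodule.mkQ_apply, Submodule.Quotient.eq]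
    refine ⟨-x, ?_⟩
    rw [LinearMap.prod_apply]
    refine Prod.ext ?_ ?_
    · show f (-x) = (0 - f x)
      rw [map_neg, zero_sub]
    · show -(σ (-x)) = (σ x - 0)
      rw [map_neg, neg_neg, sub_zero]
  ext N
  exact ⟨part1 N, part3 N⟩
end

section
/- Let T be a quasitilting A-module (i.e. Pres(T) = Gen(T) and Ext^1_A(T, Gen(T)) = 0). Then Add(T) is exactly the class of Ext-projective modules in Gen(T): a module M ∈ Gen(T) satisfies Ext^1_A(M, X) = 0 for all X ∈ Gen(T) if and only if M is a direct summand of a direct sum of copies of T. -/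
universe u

open CategoryTheory CategoryTheory.Limits Function

variable {A : Type u} [Ring A]

set_option maxHeartbeats 1000000 in
/-- For a quasitilting module `T`, `Add T` is exactly the class of Ext-projective
modules in `Gen T`. -/
theorem stmt_13 (T : ModuleCat.{u} A) (hpres : Pres T = Gen T)
    (hExt : ∀ X ∈ Gen T, Ext1Zero T X) :
    ∀ M ∈ Gen T, ((∀ X ∈ Gen T, Ext1Zero M X) ↔ M ∈ AddCl T) := by
  intro M hM
  constructor
  · intro hProj
    have hMp : M ∈ Pres T := hpres ▸ hM
    obtain ⟨I, f, hf, hker⟩ := hMp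
    obtain ⟨s, hs⟩ := hProj _ hker (ModuleCat.of A (I →₀ T))
      (ModuleCat.ofHom (LinearMap.ker f.hom).subtype) f Subtype.val_injective hf
      (by intro v
          constructor
          · intro hv; exact ⟨⟨v, hv⟩, rfl⟩
          · rintro ⟨x, rfl⟩; exact x.2)
    exact ⟨I, s, f, hs⟩
  · rintro ⟨I, s, r, hsr⟩ X hX E i p hi hp hexact
    -- for each idx, build a lift σ idx : T →ₗ E with p ∘ σ idx = r ∘ single idx
    have key : ∀ idx : I, ∃ σ : T →ₗ[A] E,
        ∀ t : T, p (σ t) = r (Finsupp.single idx t) := by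
      intro idx
      set rI : T →ₗ[A] M := r.hom.comp (Finsupp.lsingle idx) with hrI
      set q : (E × T) →ₗ[A] M :=
        p.hom.comp (LinearMap.fst A E T) - rI.comp (LinearMap.snd A E T) with hq
      set Ei : Submodule A (E × T) := LinearMap.ker q with hEi
      have mem_Ei : ∀ v : E × T, v ∈ Ei ↔ p v.1 = rI v.2 := by
        intro v
        simp [hEi, hq, sub_eq_zero]
      set i' : X →ₗ[A] Ei := LinearMap.codRestrict Ei
        ((LinearMap.inl A E T).comp i.hom)
        (by intro x; rw [mem_Ei]; simp [hexact.apply_apply_eq_zero x]) with hi'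
      set p' : Ei →ₗ[A] T := (LinearMap.snd A E T).comp Ei.subtype with hp'
      have hinj : Injective i' := by
        intro a b hab
        apply hi
        have := congrArg (fun v : Ei => (v : E × T).1) hab
        simpa [hi'] using this
      have hsurj : Surjective p' := by
        intro t
        obtain ⟨e, he⟩ := hp (rI t)
        exact ⟨⟨(e, t), (mem_Ei _).mpr he⟩, rfl⟩
      have hex : Function.Exact ⇑i' ⇑p' := by
        intro v
        constructor
        · intro hv
          have hv2 : (v : E × T).2 = 0 := hv
          have hv1 : p (v : E × T).1 = 0 := by
            have := (mem_Ei _).mp v.2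
            rw [this, hv2, map_zero]
          obtain ⟨x, hx⟩ := (hexact _).mp hv1
          refine ⟨x, ?_⟩
          apply Subtype.ext
          apply Prod.ext
          · simpa [hi'] using hx
          · simp [hi', hv2]
        · rintro ⟨x, rfl⟩
          simp [hp', hi']
      obtain ⟨σ, hσ⟩ := hExt X hX (ModuleCat.of A Ei) (ModuleCat.ofHom i') (ModuleCat.ofHom p') hinj hsurj hex
      refine ⟨((LinearMap.fst A E T).comp Ei.subtype).comp σ.hom, fun t => ?_⟩
      have h1 : p' (σ t) = t := congrArg (fun g => g.hom t) hσ
      have h2 : p (Ei.subtype (σ t)).1 = rI (Ei.subtype (σ t)).2 :=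
        (mem_Ei _).mp (σ t).2
      have h3 : (Ei.subtype (σ t)).2 = t := h1
      show p (Ei.subtype (σ t)).1 = r (Finsupp.single idx t)
      rw [h2, h3, hrI]
      rfl
    choose σ hσ using key
    set τ : (I →₀ T) →ₗ[A] E := Finsupp.lsum ℕ σ with hτ
    have hτp : ∀ v : I →₀ T, p (τ v) = r v := by
      intro v
      have : p.hom.comp τ = r.hom := by
        apply Finsupp.lhom_ext
        intro idx t
        simp only [hτ, LinearMap.comp_apply, Finsupp.lsum_single]
        exact hσ idx t
      exact DFunLike.congr_fun this v
    refine ⟨s ≫ ModuleCat.ofHom τ, ?_⟩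
    ext m
    have := congrArg (fun g => g.hom m) hsr
    show p (τ (s m)) = m
    rw [hτp]
    exact this
end

section
/- Let 𝒯 be a torsion class in Mod(A) such that every A-module M admits an exact sequence M →^φ B → C → 0 where φ is a left 𝒯-approximation (B ∈ 𝒯 and every map M → X with X ∈ 𝒯 factors through φ) and C is Ext-projective in 𝒯. Then there exists a module T with 𝒯 = Gen(T); specifically, for an approximation sequence A →^φ B → C → 0 of the regular module, T = B ⊕ C satisfies Gen(T) = 𝒯. -/
universe u

open CategoryTheory CategoryTheory.Limits Function

variable {A : Type u} [Ring A]

/-- If a torsion class `𝒯` provides, for each module, a left `𝒯`-approximation with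
Ext-projective cokernel, then for an approximation sequence `A → B → C → 0` of the
regular module, the module `T = B ⊕ C` satisfies `Gen T = 𝒯`. -/
theorem stmt_14 (𝒯 : Set (ModuleCat.{u} A))
    -- 𝒯 is a torsion class
    (hepi : ∀ X ∈ 𝒯, ∀ (Y : ModuleCat.{u} A) (p : X ⟶ Y), Surjective p → Y ∈ 𝒯)
    (hext : ∀ (X Y Z : ModuleCat.{u} A) (i : X ⟶ Y) (p : Y ⟶ Z), Injective i → Surjective p →
      Function.Exact ⇑i ⇑p → X ∈ 𝒯 → Z ∈ 𝒯 → Y ∈ 𝒯)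
    (hsum : ∀ (I : Type u) (X : I → ModuleCat.{u} A), (∀ i, X i ∈ 𝒯) →
      ModuleCat.of A (DirectSum I (fun i => (X i : Type u))) ∈ 𝒯)
    -- every module has a left 𝒯-approximation with Ext-projective cokernel
    (happrox : ∀ M : ModuleCat.{u} A, ∃ (B C : ModuleCat.{u} A) (φ : M ⟶ B) (ψ : B ⟶ C),
      B ∈ 𝒯 ∧ (∀ X ∈ 𝒯, ∀ f : M ⟶ X, ∃ g : B ⟶ X, φ ≫ g = f) ∧
      Surjective ψ ∧ Function.Exact ⇑φ ⇑ψ ∧ C ∈ 𝒯 ∧ (∀ X ∈ 𝒯, Ext1Zero C X))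
    -- a chosen approximation sequence of the regular module A
    (B C : ModuleCat.{u} A) (φ : ModuleCat.of A A ⟶ B) (ψ : B ⟶ C)
    (hB : B ∈ 𝒯) (happ : ∀ X ∈ 𝒯, ∀ f : ModuleCat.of A A ⟶ X, ∃ g : B ⟶ X, φ ≫ g = f)
    (hψ : Surjective ψ) (hex : Function.Exact ⇑φ ⇑ψ) (hC : C ∈ 𝒯)
    (hCext : ∀ X ∈ 𝒯, Ext1Zero C X) :
    Gen (ModuleCat.of A (↑B × ↑C)) = 𝒯 := by
  classical
  -- T = B × C is in 𝒯, being an extension of C by B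
  have hBC : ModuleCat.of A (↑B × ↑C) ∈ 𝒯 := by
    refine hext B (ModuleCat.of A (↑B × ↑C)) C (ModuleCat.ofHom (LinearMap.inl A ↑B ↑C)) (ModuleCat.ofHom (LinearMap.snd A ↑B ↑C))
      LinearMap.inl_injective Prod.snd_surjective Function.Exact.inl_snd hB hC
  -- any finitely supported direct sum of copies of a member of 𝒯 is in 𝒯
  have hfin : ∀ (T : ModuleCat.{u} A), T ∈ 𝒯 → ∀ (I : Type u),
      ModuleCat.of A (I →₀ T) ∈ 𝒯 := by
    intro T hT I
    have hds := hsum I (fun _ => T) (fun _ => hT)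
    exact hepi _ hds (ModuleCat.of A (I →₀ T))
      (ModuleCat.ofHom (finsuppLEquivDirectSum A T I).symm.toLinearMap)
      (finsuppLEquivDirectSum A T I).symm.surjective
  ext X
  constructor
  · rintro ⟨I, f, hf⟩
    exact hepi _ (hfin _ hBC I) X f hf
  · intro hX
    -- choose, for each x : X, a factorization of a ↦ a • x through φ
    have hfac : ∀ x : X, ∃ g : B ⟶ X, φ ≫ g = ModuleCat.ofHom (LinearMap.toSpanSingleton A X x) :=
      fun x => happ X hX (ModuleCat.ofHom (LinearMap.toSpanSingleton A X x))
    choose g hg using hfac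
    refine ⟨X, ModuleCat.ofHom (Finsupp.lsum ℕ (fun x : X => (g x).hom.comp (LinearMap.fst A ↑B ↑C))), ?_⟩
    intro x
    refine ⟨Finsupp.single x (φ (1 : A), 0), ?_⟩
    have h1 := congrArg (fun (h : ModuleCat.of A A ⟶ X) => h (1 : A)) (hg x)
    rw [ConcreteCategory.comp_apply] at h1
    have h2 : (g x) (φ (1 : A)) = x := by rw [h1]; exact one_smul A x
    show (Finsupp.lsum ℕ fun x : X => (g x).hom.comp (LinearMap.fst A ↑B ↑C))
      (Finsupp.single x (φ (1 : A), 0)) = x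
    rw [Finsupp.lsum_single, LinearMap.comp_apply]
    exact h2
end

section
/- Let T be a partial silting A-module with respect to a projective presentation σ: P₋₁ → P₀. Let ψ: P₋₁^(I) → A be the universal map with I = Hom_A(P₋₁, A), and form the pushout of σ^(I): P₋₁^(I) → P₀^(I) along ψ, yielding an exact sequence A →^φ M → T^(I) → 0. Then M belongs to 𝒟_σ and φ is a left 𝒟_σ-approximation of A. -/
universe u

open CategoryTheory CategoryTheory.Limits Function

variable {A : Type u} [Ring A]

/-- The universal map `ψ : P₋₁^(I) → A`, where `I = Hom_A(P₋₁, A)`. -/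
noncomputable def universalToA (P : ModuleCat.{u} A) :
    ModuleCat.of A ((P ⟶ ModuleCat.of A A) →₀ P) ⟶ ModuleCat.of A A :=
  ModuleCat.ofHom (Finsupp.lsum ℕ (fun f : (P ⟶ ModuleCat.of A A) => (f.hom : ↑P →ₗ[A] A)))

/-- The direct sum `σ^(I) : P₋₁^(I) → P₀^(I)` of copies of `σ`. -/
noncomputable def sigmaPow {P Q : ModuleCat.{u} A} (σ : P ⟶ Q) (I : Type u) :
    ModuleCat.of A (I →₀ P) ⟶ ModuleCat.of A (I →₀ Q) :=
  ModuleCat.ofHom (Finsupp.mapRange.linearMap (σ.hom : ↑P →ₗ[A] ↑Q))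

/-- Bongartz-type construction: if `T = coker σ` is partial silting with respect to `σ`,
then the pushout `M` of `σ^(I)` along the universal map `ψ : P₋₁^(I) → A` lies in `𝒟_σ`
and `φ = pushout.inl : A → M` is a left `𝒟_σ`-approximation of `A`. -/
theorem stmt_15 {P Q : ModuleCat.{u} A} (hP : Projective P) (hQ : Projective Q)
    (σ : P ⟶ Q)
    (hepi : ∀ X ∈ Dclass σ, ∀ (Y : ModuleCat.{u} A) (p : X ⟶ Y), Surjective p → Y ∈ Dclass σ)
    (hext : ∀ (X Y Z : ModuleCat.{u} A) (i : X ⟶ Y) (p : Y ⟶ Z), Injective i → Surjective p →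
      Function.Exact ⇑i ⇑p → X ∈ Dclass σ → Z ∈ Dclass σ → Y ∈ Dclass σ)
    (hsum : ∀ (I : Type u) (X : I → ModuleCat.{u} A), (∀ i, X i ∈ Dclass σ) →
      ModuleCat.of A (DirectSum I (fun i => (X i : Type u))) ∈ Dclass σ)
    (hT : cokernel σ ∈ Dclass σ) :
    pushout (universalToA P) (sigmaPow σ (P ⟶ ModuleCat.of A A)) ∈ Dclass σ ∧
    (∀ X ∈ Dclass σ, ∀ f : ModuleCat.of A A ⟶ X,
      ∃ g : pushout (universalToA P) (sigmaPow σ (P ⟶ ModuleCat.of A A)) ⟶ X,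
        pushout.inl (universalToA P) (sigmaPow σ (P ⟶ ModuleCat.of A A)) ≫ g = f) := by
  
  classical
  set I := (P ⟶ ModuleCat.of A A) with hI
  set ψ := universalToA P with hψ
  set s := sigmaPow σ I with hs
  set M := pushout ψ s with hM
  set φ := pushout.inl ψ s with hφ
  set ι := pushout.inr ψ s with hι
  have hψ_single : ∀ (h : I) (p : ↑P), ψ (Finsupp.single h p) = h p := by
    intro h p
    exact Finsupp.lsum_single ℕ (fun f : (P ⟶ ModuleCat.of A A) => f.hom) h p
  have hs_single : ∀ (i : I) (p : ↑P), s (Finsupp.single i p) = Finsupp.single i (σ p) := by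
    intro i p
    exact Finsupp.mapRange_single (f := σ.hom) (hf := map_zero _)
  -- joint surjectivity of inl, inr
  have hjoint : ∀ m : ↑M, ∃ (a : A) (q : I →₀ ↑Q), φ a + ι q = m := by
    have hsup : LinearMap.range φ.hom
        ⊔ LinearMap.range ι.hom = ⊤ := by
      set S := LinearMap.range φ.hom
        ⊔ LinearMap.range ι.hom with hS
      have hz : ModuleCat.ofHom S.mkQ = (0 : M ⟶ ModuleCat.of A (↑M ⧸ S)) := by
        apply pushout.hom_ext
        · apply ModuleCat.hom_ext; apply LinearMap.ext; intro a
          show S.mkQ (φ a) = 0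
          rw [Submodule.mkQ_apply, Submodule.Quotient.mk_eq_zero]
          exact le_sup_left (α := Submodule A ↑M) (LinearMap.mem_range_self _ a)
        · apply ModuleCat.hom_ext; apply LinearMap.ext; intro q
          show S.mkQ (ι q) = 0
          rw [Submodule.mkQ_apply, Submodule.Quotient.mk_eq_zero]
          exact le_sup_right (α := Submodule A ↑M) (LinearMap.mem_range_self _ q)
      rw [eq_top_iff]
      intro m _
      have : S.mkQ m = 0 := by
        have := ConcreteCategory.congr_hom hz m
        exact this
      rwa [Submodule.mkQ_apply, Submodule.Quotient.mk_eq_zero] at this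
    intro m
    have : m ∈ (⊤ : Submodule A ↑M) := trivial
    rw [← hsup] at this
    rcases Submodule.mem_sup.mp this with ⟨x, hx, y, hy, hxy⟩
    rcases hx with ⟨a, rfl⟩
    rcases hy with ⟨q, rfl⟩
    exact ⟨a, q, hxy⟩
  -- the cokernel of sigmaPow, concretely
  set R := LinearMap.range s.hom with hR
  set C := ModuleCat.of A ((I →₀ ↑Q) ⧸ R) with hC
  have hw : ψ ≫ (0 : ModuleCat.of A A ⟶ C) = s ≫ ModuleCat.ofHom R.mkQ := by
    apply ModuleCat.hom_ext; apply LinearMap.ext; intro x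
    show (0 : ↑C) = R.mkQ (s x)
    rw [Submodule.mkQ_apply]
    exact ((Submodule.Quotient.mk_eq_zero R).mpr (LinearMap.mem_range_self _ x)).symm
  set π : M ⟶ C := pushout.desc 0 (ModuleCat.ofHom R.mkQ) hw with hπ
  have hπφ : ∀ a : A, π (φ a) = 0 := by
    intro a
    have := ConcreteCategory.congr_hom (pushout.inl_desc (0 : ModuleCat.of A A ⟶ C) (ModuleCat.ofHom R.mkQ) hw) a
    exact this
  have hπι : ∀ q : I →₀ ↑Q, π (ι q) = R.mkQ q := by
    intro q
    have := ConcreteCategory.congr_hom (pushout.inr_desc (0 : ModuleCat.of A A ⟶ C) (ModuleCat.ofHom R.mkQ) hw) q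
    exact this
  -- C is in Dclass
  have hCD : C ∈ Dclass σ := by
    have hD := hsum I (fun _ => cokernel σ) (fun _ => hT)
    have hκw : ∀ i : I, σ ≫ (ModuleCat.ofHom ((R.mkQ.comp (Finsupp.lsingle i)))) = 0 := by
      intro i
      apply ModuleCat.hom_ext; apply LinearMap.ext; intro p
      show R.mkQ (Finsupp.single i (σ p)) = 0
      rw [Submodule.mkQ_apply, Submodule.Quotient.mk_eq_zero]
      exact ⟨Finsupp.single i p, hs_single i p⟩
    set κ : I → (cokernel σ ⟶ C) := fun i =>
      cokernel.desc σ (ModuleCat.ofHom ((R.mkQ.comp (Finsupp.lsingle i)))) (hκw i) with hκ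
    set t : ModuleCat.of A (DirectSum I (fun _ => ↑(cokernel σ))) ⟶ C :=
      ModuleCat.ofHom (DirectSum.toModule A I ↑C (fun i => (κ i).hom)) with ht
    have hκπ : ∀ (i : I) (q : ↑Q), (κ i) (cokernel.π σ q) = R.mkQ (Finsupp.single i q) := by
      intro i q
      have := ConcreteCategory.congr_hom (cokernel.π_desc σ
        (ModuleCat.ofHom ((R.mkQ.comp (Finsupp.lsingle i)))) (hκw i)) q
      exact this
    have hsurj : Surjective t := by
      intro c
      obtain ⟨w, rfl⟩ := R.mkQ_surjective c
      induction w using Finsupp.induction with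
      | zero => exact ⟨0, map_zero _⟩
      | single_add i q w _ _ ih =>
        obtain ⟨x, hx⟩ := ih
        refine ⟨(show ↑(ModuleCat.of A (DirectSum I (fun _ => ↑(cokernel σ)))) from
          DirectSum.lof A I (fun _ => ↑(cokernel σ)) i (cokernel.π σ q)) + x, ?_⟩
        rw [map_add, map_add, hx]
        congr 1
        exact (DirectSum.toModule_lof A (φ := fun j => (κ j).hom) i (cokernel.π σ q)).trans (hκπ i q)
    exact hepi _ hD C t hsurj
  constructor
  · -- M ∈ Dclass σ
    intro f
    obtain ⟨g₁, hg₁0⟩ := hCD (f ≫ π)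
    have hg₁ : σ ≫ g₁ = f ≫ π := hg₁0
    haveI : Epi π := by
      rw [ModuleCat.epi_iff_surjective]
      intro c
      obtain ⟨w, rfl⟩ := R.mkQ_surjective c
      exact ⟨ι w, hπι w⟩
    haveI : Projective Q := hQ
    set g₂ : Q ⟶ M := Projective.factorThru g₁ π with hg₂
    have hfac : g₂ ≫ π = g₁ := Projective.factorThru_comp g₁ π
    set d : P ⟶ M := f - σ ≫ g₂ with hd
    have hdmem : ∀ p : ↑P, d p ∈ LinearMap.range φ.hom := by
      intro p
      have hπd : π (d p) = 0 := by
        have h1 : π (f p) = (f ≫ π) p := rfl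
        have h2 : (f ≫ π) p = (σ ≫ g₁) p := by rw [hg₁]
        have : π (d p) = π (f p) - π (g₂ (σ p)) := by
          rw [hd]
          show π (f p - (σ ≫ g₂) p) = _
          rw [map_sub]
          rfl
        rw [this, h1, h2]
        show g₁ (σ p) - π (g₂ (σ p)) = 0
        have : π (g₂ (σ p)) = (g₂ ≫ π) (σ p) := rfl
        rw [this, hfac, sub_self]
      obtain ⟨a, q, hq⟩ := hjoint (d p)
      have : R.mkQ q = 0 := by
        have := congrArg π hq
        rw [map_add, hπφ, hπι, zero_add, hπd] at this
        exact this
      rw [Submodule.mkQ_apply, Submodule.Quotient.mk_eq_zero] at this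
      obtain ⟨x, rfl⟩ := this
      have hcond : ι (s x) = φ (ψ x) :=
        (ConcreteCategory.congr_hom (pushout.condition (f := ψ) (g := s)) x).symm
      rw [← hq, hcond, ← map_add]
      exact LinearMap.mem_range_self _ _
    haveI : Module.Projective A ↑P := (IsProjective.iff_projective (R := A) ↑P).mpr hP
    set dcod : ↑P →ₗ[A] LinearMap.range φ.hom :=
      LinearMap.codRestrict _ d.hom hdmem with hdcod
    obtain ⟨h, hh⟩ := Module.projective_lifting_property
      φ.hom.rangeRestrict dcod
      (LinearMap.surjective_rangeRestrict _)
    have hφh : ∀ p : ↑P, φ (h p) = d p := by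
      intro p
      have := DFunLike.congr_fun hh p
      exact congrArg Subtype.val this
    set h' : I := ModuleCat.ofHom h with hh'
    refine ⟨g₂ + (show Q ⟶ M from ModuleCat.ofHom (Finsupp.lsingle h') ≫ ι), ?_⟩
    apply ModuleCat.hom_ext; apply LinearMap.ext; intro p
    show g₂ (σ p) + ι (Finsupp.single h' (σ p)) = f p
    have : ι (Finsupp.single h' (σ p)) = φ (h' p) := by
      rw [← hs_single h' p]
      have hcond : ι (s (Finsupp.single h' p)) = φ (ψ (Finsupp.single h' p)) :=
        (ConcreteCategory.congr_hom (pushout.condition (f := ψ) (g := s)) (Finsupp.single h' p)).symm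
      rw [hcond, hψ_single]
    rw [this]
    have : φ (h' p) = d p := hφh p
    rw [this, hd]
    show g₂ (σ p) + (f p - g₂ (σ p)) = f p
    abel
  · -- approximation
    intro X hX f
    choose gg hgg using hX
    set k : ModuleCat.of A (I →₀ ↑Q) ⟶ X :=
      ModuleCat.ofHom (Finsupp.lsum ℕ (fun i : I => (gg (i ≫ f)).hom)) with hk
    have hw2 : ψ ≫ f = s ≫ k := by
      apply ModuleCat.hom_ext
      apply Finsupp.lhom_ext
      intro i p
      show f (ψ (Finsupp.single i p)) = k (s (Finsupp.single i p))
      rw [hψ_single, hs_single]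
      have h1 : k (Finsupp.single i (σ p)) = gg (i ≫ f) (σ p) :=
        Finsupp.lsum_single ℕ (fun i : I => (gg (i ≫ f)).hom) i (σ p)
      rw [h1]
      have h2 : gg (i ≫ f) (σ p) = (σ ≫ gg (i ≫ f)) p := rfl
      rw [h2]
      have h3 : σ ≫ gg (i ≫ f) = i ≫ f := hgg (i ≫ f)
      rw [h3]
      rfl
    exact ⟨pushout.desc f k hw2, pushout.inl_desc f k hw2⟩
end

section
/- Every partial silting A-module T with respect to a projective presentation σ is a direct summand of a silting A-module T̄ = T ⊕ M whose associated torsion class is 𝒟_σ, i.e. Gen(T ⊕ M) = 𝒟_σ and T ⊕ M is silting with respect to a suitable projective presentation γ with 𝒟_γ = 𝒟_σ. -/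
universe u

open CategoryTheory CategoryTheory.Limits Function

variable {A : Type u} [Ring A]

namespace Stmt16
variable {A : Type u} [Ring A] {P Q : ModuleCat.{u} A}

abbrev Idx (P : ModuleCat.{u} A) : Type u := P ⟶ ModuleCat.of A A

noncomputable def uMap (P : ModuleCat.{u} A) : (Idx P →₀ P) →ₗ[A] A :=
  Finsupp.lsum ℕ fun f => f.hom

@[simp] lemma uMap_single (f : Idx P) (p : P) : uMap P (Finsupp.single f p) = f p := by
  simp [uMap]

noncomputable def sMap (σ : P ⟶ Q) : (Idx P →₀ P) →ₗ[A] (Idx P →₀ Q) :=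
  Finsupp.mapRange.linearMap σ.hom

@[simp] lemma sMap_single (σ : P ⟶ Q) (f : Idx P) (p : P) :
    sMap σ (Finsupp.single f p) = Finsupp.single f (σ p) := by
  simp [sMap]

noncomputable def gM (σ : P ⟶ Q) : (Idx P →₀ P) →ₗ[A] (A × (Idx P →₀ Q)) :=
  (uMap P).prod (-(sMap σ))

lemma gM_apply (σ : P ⟶ Q) (x : Idx P →₀ P) : gM σ x = (uMap P x, -(sMap σ x)) := rfl

noncomputable abbrev MqT (σ : P ⟶ Q) : Type u := (A × (Idx P →₀ Q)) ⧸ LinearMap.range (gM σ)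

noncomputable def qM (σ : P ⟶ Q) : (A × (Idx P →₀ Q)) →ₗ[A] MqT σ :=
  (LinearMap.range (gM σ)).mkQ

noncomputable def jA (σ : P ⟶ Q) : A →ₗ[A] MqT σ := (qM σ).comp (LinearMap.inl A A _)
noncomputable def jQ (σ : P ⟶ Q) : (Idx P →₀ Q) →ₗ[A] MqT σ := (qM σ).comp (LinearMap.inr A A _)

lemma qM_surjective (σ : P ⟶ Q) : Surjective (qM σ) := Submodule.mkQ_surjective _

lemma qM_eq_zero_iff (σ : P ⟶ Q) (y : A × (Idx P →₀ Q)) :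
    qM σ y = 0 ↔ y ∈ LinearMap.range (gM σ) := by
  simp [qM, Submodule.Quotient.mk_eq_zero]

lemma qM_gM (σ : P ⟶ Q) (x : Idx P →₀ P) : qM σ (gM σ x) = 0 :=
  (qM_eq_zero_iff σ _).mpr ⟨x, rfl⟩

lemma jA_jQ (σ : P ⟶ Q) (x : Idx P →₀ P) : jA σ (uMap P x) = jQ σ (sMap σ x) := by
  have h := qM_gM σ x
  have e : gM σ x = (uMap P x, 0) - (0, sMap σ x) := by
    simp [gM_apply, Prod.ext_iff]
  rw [e, map_sub] at h
  simpa [jA, jQ] using sub_eq_zero.mp h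

lemma factor_of_mem {X : ModuleCat.{u} A} (σ : P ⟶ Q) (hX : X ∈ Dclass σ) (h : P →ₗ[A] X) :
    ∃ g : Q →ₗ[A] X, g.comp σ.hom = h := by
  simp only [Dclass, Set.mem_setOf_eq] at hX
  obtain ⟨g, hg⟩ := hX (ModuleCat.ofHom h)
  exact ⟨g.hom, congrArg ModuleCat.Hom.hom hg⟩

lemma mem_of_factor {X : ModuleCat.{u} A} (σ : P ⟶ Q)
    (h : ∀ f : P →ₗ[A] X, ∃ g : Q →ₗ[A] X, g.comp σ.hom = f) : X ∈ Dclass σ := by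
  simp only [Dclass, Set.mem_setOf_eq]
  intro f
  obtain ⟨g, hg⟩ := h f.hom
  exact ⟨ModuleCat.ofHom g, ModuleCat.hom_ext hg⟩

lemma factor_gM (σ : P ⟶ Q) {X : ModuleCat.{u} A} (hX : X ∈ Dclass σ)
    (h : (Idx P →₀ P) →ₗ[A] X) :
    ∃ g : (A × (Idx P →₀ Q)) →ₗ[A] X, g.comp (gM σ) = h := by
  choose g hg using fun f : Idx P => factor_of_mem σ hX (h.comp (Finsupp.lsingle f))
  refine ⟨LinearMap.coprod 0 (-(Finsupp.lsum ℕ g)), ?_⟩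
  apply Finsupp.lhom_ext
  intro f p
  have hfp := DFunLike.congr_fun (hg f) p
  simp only [LinearMap.coe_comp, Function.comp_apply, Finsupp.lsingle_apply] at hfp
  simp only [LinearMap.coe_comp, Function.comp_apply, gM_apply, LinearMap.coprod_apply,
    LinearMap.zero_apply, LinearMap.neg_apply, map_neg, neg_neg, zero_add, uMap_single,
    sMap_single, Finsupp.lsum_single]
  exact hfp

end Stmt16

open Stmt16

/-- Every partial silting module `T = coker σ` is a direct summand of a silting module
`T̄ = T ⊕ M` with `Gen T̄ = 𝒟_σ`, where `T̄` is silting with respect to a projective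
presentation `γ` satisfying `𝒟_γ = 𝒟_σ`. -/
theorem stmt_16 {P Q : ModuleCat.{u} A} (hP : Projective P) (hQ : Projective Q)
    (σ : P ⟶ Q)
    (hepi : ∀ X ∈ Dclass σ, ∀ (Y : ModuleCat.{u} A) (p : X ⟶ Y), Surjective p → Y ∈ Dclass σ)
    (hext : ∀ (X Y Z : ModuleCat.{u} A) (i : X ⟶ Y) (p : Y ⟶ Z), Injective i → Surjective p →
      Function.Exact ⇑i ⇑p → X ∈ Dclass σ → Z ∈ Dclass σ → Y ∈ Dclass σ)
    (hsum : ∀ (I : Type u) (X : I → ModuleCat.{u} A), (∀ i, X i ∈ Dclass σ) →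
      ModuleCat.of A (DirectSum I (fun i => (X i : Type u))) ∈ Dclass σ)
    (hT : cokernel σ ∈ Dclass σ) :
    ∃ (M : ModuleCat.{u} A) (P' Q' : ModuleCat.{u} A)
      (_ : Projective P') (_ : Projective Q') (γ : P' ⟶ Q')
      (π : Q' ⟶ ModuleCat.of A (↑(cokernel σ) × ↑M)),
      Surjective π ∧ Function.Exact ⇑γ ⇑π ∧ Dclass γ = Dclass σ ∧
      Gen (ModuleCat.of A (↑(cokernel σ) × ↑M)) = Dclass σ := by
  classical
  -- module-level projectivity
  have hPm : Module.Projective A P := (IsProjective.iff_projective _).mpr hP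
  have hQm : Module.Projective A Q := (IsProjective.iff_projective _).mpr hQ
  -- the cokernel projection
  set Tc : ModuleCat.{u} A := cokernel σ with hTc_def
  set t : Q ⟶ Tc := cokernel.π σ with ht_def
  have ht_surj : Surjective ⇑t := by
    rw [← ModuleCat.epi_iff_surjective]; infer_instance
  have ht_exact : ∀ y : Q, t y = 0 ↔ y ∈ Set.range ⇑σ := by
    have h3 := ModuleCat.cokernel_π_cokernelIsoRangeQuotient_hom σ
    have einj : Injective ⇑(ModuleCat.cokernelIsoRangeQuotient σ).hom := by
      rw [← ModuleCat.mono_iff_injective]; infer_instance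
    intro y
    have h4 : (ModuleCat.cokernelIsoRangeQuotient σ).hom (t y)
        = (LinearMap.range σ.hom).mkQ y := by
      rw [ht_def]
      exact ConcreteCategory.congr_hom h3 y
    constructor
    · intro h
      have h6 : (LinearMap.range σ.hom).mkQ y = 0 := by
        rw [← h4, h, map_zero]
      rw [Submodule.mkQ_apply, Submodule.Quotient.mk_eq_zero] at h6
      exact h6
    · rintro ⟨x, rfl⟩
      apply einj
      rw [h4, map_zero, Submodule.mkQ_apply, Submodule.Quotient.mk_eq_zero]
      exact ⟨x, rfl⟩
  have htσ : ∀ p : P, t (σ p) = 0 := fun p => (ht_exact (σ p)).mpr ⟨p, rfl⟩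
  -- closure of Dclass under Finsupp powers
  have hFin : ∀ (J : Type u) (W : ModuleCat.{u} A), W ∈ Dclass σ →
      ModuleCat.of A (J →₀ W) ∈ Dclass σ := by
    intro J W hW
    have h1 := hsum J (fun _ => W) (fun _ => hW)
    exact hepi _ h1 (ModuleCat.of A (J →₀ W))
      (show ModuleCat.of A (DirectSum J fun _ => W) ⟶ ModuleCat.of A (J →₀ W) from
        ModuleCat.ofHom (finsuppLEquivDirectSum A W J).symm.toLinearMap)
      (finsuppLEquivDirectSum A W J).symm.surjective
  -- closure of Dclass under binary products
  have hProd : ∀ (X Y : ModuleCat.{u} A), X ∈ Dclass σ → Y ∈ Dclass σ →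
      ModuleCat.of A (X × Y) ∈ Dclass σ := by
    intro X Y hX hY
    apply mem_of_factor
    intro f
    obtain ⟨g₁, hg₁⟩ := factor_of_mem σ hX ((LinearMap.fst A X Y).comp f)
    obtain ⟨g₂, hg₂⟩ := factor_of_mem σ hY ((LinearMap.snd A X Y).comp f)
    refine ⟨g₁.prod g₂, ?_⟩
    refine LinearMap.ext fun p => ?_
    exact Prod.ext (DFunLike.congr_fun hg₁ p) (DFunLike.congr_fun hg₂ p)
  -- the map to the Finsupp power of the cokernel
  set c0 : (Idx P →₀ Q) →ₗ[A] (Idx P →₀ (Tc : Type u)) :=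
    Finsupp.mapRange.linearMap t.hom with hc0_def
  have hc0_single : ∀ (f : Idx P) (y : Q), c0 (Finsupp.single f y) = Finsupp.single f (t y) := by
    intro f y; simp [hc0_def]
  have hc0_surj : Surjective ⇑c0 := by
    have : ⇑c0 = Finsupp.mapRange ⇑t (map_zero _) := rfl
    rw [this]
    exact Finsupp.mapRange_surjective _ _ ht_surj
  have hc0_apply : ∀ (w : Idx P →₀ Q) (f : Idx P), c0 w f = t (w f) := by
    intro w f; simp [hc0_def]
  -- πbar and πM
  have hkill : LinearMap.range (gM σ) ≤ LinearMap.ker (LinearMap.coprod 0 c0) := by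
    rintro _ ⟨x, rfl⟩
    have : c0.comp (sMap σ) = 0 := by
      apply Finsupp.lhom_ext
      intro f p
      simp [sMap_single, hc0_single, htσ p]
    have h2 : c0 (sMap σ x) = 0 := DFunLike.congr_fun this x
    simp [gM_apply, LinearMap.coprod_apply, h2]
  set πM : MqT σ →ₗ[A] (Idx P →₀ (Tc : Type u)) :=
    (LinearMap.range (gM σ)).liftQ (LinearMap.coprod 0 c0) hkill with hπM_def
  have hπM_q : ∀ y, πM (qM σ y) = (LinearMap.coprod 0 c0) y := by
    intro y; rfl
  have hπM_jQ : ∀ w, πM (jQ σ w) = c0 w := by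
    intro w
    have := hπM_q (0, w)
    simpa [jQ, qM] using this
  have hπM_jA : ∀ a : A, πM (jA σ a) = 0 := by
    intro a
    have := hπM_q (a, 0)
    simpa [jA, qM] using this
  -- kernel of πM is contained in the image of jA
  have hker : ∀ m : MqT σ, πM m = 0 → ∃ a : A, jA σ a = m := by
    intro m hm
    obtain ⟨⟨a, w⟩, rfl⟩ := qM_surjective σ m
    have hw : c0 w = 0 := by
      have := hπM_q (a, w)
      rw [hm] at this
      simpa using this.symm
    have hrange : ∀ f, w f ∈ Set.range ⇑σ := by
      intro f
      refine (ht_exact (w f)).mp ?_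
      rw [← hc0_apply w f, hw]; rfl
    choose p hp using hrange
    set x : Idx P →₀ P := w.support.sum fun f => Finsupp.single f (p f) with hx
    have hws : sMap σ x = w := by
      rw [hx, map_sum]
      calc (∑ f ∈ w.support, sMap σ (Finsupp.single f (p f)))
          = ∑ f ∈ w.support, Finsupp.single f (w f) := by
            refine Finset.sum_congr rfl fun f _ => by rw [sMap_single, hp]
        _ = w := Finsupp.sum_single w
    refine ⟨a + uMap P x, ?_⟩
    rw [map_add, jA_jQ σ x, hws]
    show qM σ (a, 0) + qM σ (0, w) = qM σ (a, w)
    rw [← map_add]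
    norm_num
    -- the Finsupp power of the cokernel is in D
  have hTI : ModuleCat.of A (Idx P →₀ (Tc : Type u)) ∈ Dclass σ := hFin (Idx P) Tc hT
  -- M is in D
  have hMmem : ModuleCat.of A (MqT σ) ∈ Dclass σ := by
    apply mem_of_factor
    intro f
    obtain ⟨h, hh⟩ := factor_of_mem σ hTI (πM.comp f)
    obtain ⟨h', hh'⟩ := Module.projective_lifting_property c0 h hc0_surj
    set r : P →ₗ[A] MqT σ :=
      (show P →ₗ[A] MqT σ from f) - (jQ σ).comp (h'.comp σ.hom) with hr
    have hrker : ∀ p : P, πM (r p) = 0 := by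
      intro p
      have e1 : πM (jQ σ (h' (σ p))) = h (σ p) := by
        rw [hπM_jQ]
        exact DFunLike.congr_fun hh' (σ p)
      have e2 : h (σ p) = πM (f p) := DFunLike.congr_fun hh p
      have e3 : r p = (show MqT σ from f p) - jQ σ (h' (σ p)) := rfl
      rw [e3, map_sub, e1, ← e2, sub_self]
    have hrsub : ∀ p, r p ∈ LinearMap.range (jA σ) := by
      intro p
      obtain ⟨a, ha⟩ := hker _ (hrker p)
      exact ⟨a, ha⟩
    obtain ⟨a, ha⟩ := Module.projective_lifting_property ((jA σ).rangeRestrict)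
      (r.codRestrict _ hrsub) (LinearMap.surjective_rangeRestrict _)
    have ha' : ∀ p : P, jA σ (a p) = r p := by
      intro p
      exact congrArg Subtype.val (DFunLike.congr_fun ha p)
    set aI : Idx P := (ModuleCat.ofHom a) with haI
    refine ⟨(jQ σ).comp (Finsupp.lsingle aI + h'), ?_⟩
    apply LinearMap.ext
    intro p
    have h1 : jA σ (a p) = jQ σ (Finsupp.single aI (σ p)) := by
      have h2 := jA_jQ σ (Finsupp.single aI p)
      rw [uMap_single, sMap_single] at h2
      exact h2
    have h3 : r p + jQ σ (h' (σ p)) = f p := by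
      rw [show r p = (show MqT σ from f p) - jQ σ (h' (σ p)) from rfl]
      exact sub_add_cancel _ _
    calc ((jQ σ).comp (Finsupp.lsingle aI + h')).comp σ.hom p
        = jQ σ (Finsupp.single aI (σ p)) + jQ σ (h' (σ p)) := by
          simp [Finsupp.lsingle_apply, map_add]
      _ = r p + jQ σ (h' (σ p)) := by rw [← h1, ha' p]
      _ = f p := h3
  -- presentation maps
  set γL : (P × (Idx P →₀ P)) →ₗ[A] (Q × (A × (Idx P →₀ Q))) :=
    σ.hom.prodMap (gM σ) with hγL
  set πL : (Q × (A × (Idx P →₀ Q))) →ₗ[A] (Tc.carrier × MqT σ) :=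
    t.hom.prodMap (qM σ) with hπL
  -- projectivity
  have hprojFP : Module.Projective A (Idx P →₀ (P : Type u)) := by
    haveI : ∀ i : Idx P, Module.Projective A P := fun _ => hPm
    haveI : Module.Projective A (Π₀ _ : Idx P, (P : Type u)) := inferInstance
    exact Module.Projective.of_equiv
      (show (Π₀ _ : Idx P, (P : Type u)) ≃ₗ[A] (Idx P →₀ (P : Type u)) from
        (finsuppLEquivDirectSum A (P : Type u) (Idx P)).symm)
  have hprojFQ : Module.Projective A (Idx P →₀ (Q : Type u)) := by
    haveI : ∀ i : Idx P, Module.Projective A Q := fun _ => hQm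
    haveI : Module.Projective A (Π₀ _ : Idx P, (Q : Type u)) := inferInstance
    exact Module.Projective.of_equiv
      (show (Π₀ _ : Idx P, (Q : Type u)) ≃ₗ[A] (Idx P →₀ (Q : Type u)) from
        (finsuppLEquivDirectSum A (Q : Type u) (Idx P)).symm)
  have hP' : Projective (ModuleCat.of A (P × (Idx P →₀ P))) := by
    haveI := hPm; haveI := hprojFP
    haveI : Module.Projective A (P × (Idx P →₀ P)) := inferInstance
    exact (IsProjective.iff_projective _).mp this
  have hQ' : Projective (ModuleCat.of A (Q × (A × (Idx P →₀ Q)))) := by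
    haveI := hQm; haveI := hprojFQ
    haveI : Module.Projective A (Q × (A × (Idx P →₀ Q))) := inferInstance
    exact (IsProjective.iff_projective _).mp this
  -- surjectivity of πL
  have hπ_surj : Surjective ⇑πL := by
    rw [hπL, LinearMap.coe_prodMap]
    exact ht_surj.prodMap (qM_surjective σ)
  -- exactness
  have hexγπ : Function.Exact ⇑γL ⇑πL := by
    rintro ⟨y₁, y₂⟩
    constructor
    · intro h0
      have h1 : t y₁ = 0 ∧ qM σ y₂ = 0 := by
        have : πL (y₁, y₂) = (t y₁, qM σ y₂) := rfl
        rw [this] at h0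
        exact Prod.mk.injEq .. ▸ Prod.ext_iff.mp h0
      obtain ⟨x₁, hx₁⟩ := (ht_exact y₁).mp h1.1
      obtain ⟨x₂, hx₂⟩ := (qM_eq_zero_iff σ y₂).mp h1.2
      refine ⟨(x₁, x₂), ?_⟩
      show (σ x₁, gM σ x₂) = (y₁, y₂)
      rw [hx₁, hx₂]
    · rintro ⟨⟨x₁, x₂⟩, h9⟩
      rw [← h9]
      show πL (σ x₁, gM σ x₂) = 0
      have : πL (σ x₁, gM σ x₂) = (t (σ x₁), qM σ (gM σ x₂)) := rfl
      rw [this, htσ, qM_gM]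
      rfl
  -- equality of the D-classes
  have hDeq : Dclass (show ModuleCat.of A (P × (Idx P →₀ P)) ⟶
      ModuleCat.of A (Q × (A × (Idx P →₀ Q))) from ModuleCat.ofHom γL) = Dclass σ := by
    ext X
    constructor
    · intro hX
      apply mem_of_factor
      intro f
      obtain ⟨g, hg⟩ := factor_of_mem _ hX (f.comp (LinearMap.fst A (P : Type u) (Idx P →₀ P)))
      refine ⟨g.comp (LinearMap.inl A (Q : Type u) (A × (Idx P →₀ Q))), ?_⟩
      apply LinearMap.ext
      intro p
      have h1 := DFunLike.congr_fun hg ((p : P), (0 : Idx P →₀ P))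
      have e1 : γL ((p : P), (0 : Idx P →₀ P))
          = ((σ p : Q), (0 : A × (Idx P →₀ Q))) := by
        show ((σ p), gM σ 0) = _
        rw [map_zero]
      have h2 : g (γL ((p : P), (0 : Idx P →₀ P))) = f p := h1
      rw [e1] at h2
      exact h2
    · intro hX
      apply mem_of_factor
      intro f
      obtain ⟨g₁, hg₁⟩ := factor_of_mem σ hX (f.comp (LinearMap.inl A (P : Type u) (Idx P →₀ P)))
      obtain ⟨g₂, hg₂⟩ := factor_gM σ hX (f.comp (LinearMap.inr A (P : Type u) (Idx P →₀ P)))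
      refine ⟨LinearMap.coprod g₁ g₂, ?_⟩
      apply LinearMap.ext
      rintro ⟨p, z⟩
      have e1 := DFunLike.congr_fun hg₁ p
      have e2 := DFunLike.congr_fun hg₂ z
      simp only [LinearMap.coe_comp, Function.comp_apply, LinearMap.inl_apply, LinearMap.inr_apply] at e1 e2
      show g₁ (σ p) + g₂ (gM σ z) = f (p, z)
      rw [e1, e2, ← map_add]
      congr 1
      exact Prod.ext (add_zero p) (zero_add z)
  -- Gen equality
  have hGen : Gen (ModuleCat.of A (Tc.carrier × MqT σ)) = Dclass σ := by
    apply Set.Subset.antisymm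
    · rintro N ⟨J, f, hf⟩
      have hW : ModuleCat.of A (Tc.carrier × MqT σ) ∈ Dclass σ :=
        hProd Tc (ModuleCat.of A (MqT σ)) hT hMmem
      have hJ := hFin J _ hW
      exact hepi _ hJ N f hf
    · intro X hX
      have hphi : ∀ x : X, ∃ φ : MqT σ →ₗ[A] X, φ (jA σ 1) = x := by
        intro x
        set hA : A →ₗ[A] X := LinearMap.toSpanSingleton A X x with hhA
        choose g hg using fun f : Idx P => factor_of_mem σ hX (hA.comp f.hom)
        set G : (Idx P →₀ Q) →ₗ[A] X := Finsupp.lsum ℕ g with hG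
        have hGs : G.comp (sMap σ) = hA.comp (uMap P) := by
          apply Finsupp.lhom_ext
          intro f p
          have h5 := DFunLike.congr_fun (hg f) p
          simp only [LinearMap.coe_comp, Function.comp_apply] at h5 ⊢
          rw [sMap_single, uMap_single, hG]
          rw [Finsupp.lsum_single]
          exact h5
        have hkill2 : LinearMap.range (gM σ) ≤ LinearMap.ker (LinearMap.coprod hA G) := by
          rintro _ ⟨z, rfl⟩
          have hz := DFunLike.congr_fun hGs z
          simp only [LinearMap.coe_comp, Function.comp_apply] at hz
          simp [gM_apply, LinearMap.coprod_apply, hz]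
        refine ⟨(LinearMap.range (gM σ)).liftQ (LinearMap.coprod hA G) hkill2, ?_⟩
        show (LinearMap.range (gM σ)).liftQ (LinearMap.coprod hA G) hkill2 (qM σ (1, 0)) = x
        have h6 : (LinearMap.range (gM σ)).liftQ (LinearMap.coprod hA G) hkill2 (qM σ (1, 0))
            = (LinearMap.coprod hA G) ((1 : A), (0 : Idx P →₀ Q)) := rfl
        rw [h6]
        simp [hhA]
      choose φ hφ using hphi
      refine ⟨X, ModuleCat.ofHom (Finsupp.lsum ℕ (fun x => (φ x).comp (LinearMap.snd A (Tc : Type u) (MqT σ)))), ?_⟩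
      intro x
      refine ⟨Finsupp.single x ((0 : (Tc : Type u)), jA σ 1), ?_⟩
      show (Finsupp.lsum ℕ (fun x => (φ x).comp (LinearMap.snd A (Tc : Type u) (MqT σ))))
        (Finsupp.single x ((0 : (Tc : Type u)), jA σ 1)) = x
      rw [Finsupp.lsum_single]
      simp [hφ x]
  exact ⟨ModuleCat.of A (MqT σ), ModuleCat.of A (P × (Idx P →₀ P)),
    ModuleCat.of A (Q × (A × (Idx P →₀ Q))), hP', hQ', ModuleCat.ofHom γL, ModuleCat.ofHom πL,
    hπ_surj, hexγπ, hDeq, hGen⟩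
end

section
/- Let σ be a two-term complex of projective A-modules P₋₁ → P₀ (in degrees −1 and 0), viewed as an object of the derived category D(A), and let X be a complex with H^i(X) = 0 for all i > 0. Then Hom_{D(A)}(σ, X[1]) = 0 if and only if H^0(X) ∈ 𝒟_σ. In particular, 𝒟_σ equals the class of modules N with Hom_{D(A)}(σ, N[1]) = 0. -/
universe u

open CategoryTheory CategoryTheory.Limits Function

variable {A : Type u} [Ring A]

universe w

namespace Stmt17Aux
open HomologicalComplex

variable {A : Type u} [Ring A]


lemma forall_eq_zero_iff {C : Type*} [Category C] [Limits.HasZeroMorphisms C]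
    {X B B' : C} (e : B ≅ B') :
    (∀ f : X ⟶ B, f = 0) ↔ (∀ f : X ⟶ B', f = 0) := by
  constructor
  · intro h f
    have := h (f ≫ e.inv)
    calc f = (f ≫ e.inv) ≫ e.hom := by simp
    _ = 0 := by rw [this]; simp
  · intro h f
    have := h (f ≫ e.hom)
    calc f = (f ≫ e.hom) ≫ e.inv := by simp
    _ = 0 := by rw [this]; simp

lemma surjective_comp_of_iso {C : Type*} [Category C] {P Q : C} (d : P ⟶ Q)
    {H H' : C} (e : H ≅ H')
    (hs : Surjective (fun g : Q ⟶ H => d ≫ g)) :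
    Surjective (fun g : Q ⟶ H' => d ≫ g) := by
  intro b
  obtain ⟨a, ha⟩ := hs (b ≫ e.inv)
  refine ⟨a ≫ e.hom, ?_⟩
  dsimp at ha ⊢
  rw [← Category.assoc, ha, Category.assoc, e.inv_hom_id, Category.comp_id]

lemma surjective_comp_iff_iso {C : Type*} [Category C] {P Q : C} (d : P ⟶ Q)
    {H H' : C} (e : H ≅ H') :
    Surjective (fun g : Q ⟶ H => d ≫ g) ↔ Surjective (fun g : Q ⟶ H' => d ≫ g) :=
  ⟨surjective_comp_of_iso d e, surjective_comp_of_iso d e.symm⟩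


lemma lift_of_exact {M X₁ X₂ X₃ : ModuleCat.{u} A} [Projective M]
    (f : X₁ ⟶ X₂) (g : X₂ ⟶ X₃) (hfg : f ≫ g = 0)
    (hex : ∀ x₂ : X₂, g x₂ = 0 → ∃ x₁, f x₁ = x₂)
    (u : M ⟶ X₂) (hu : u ≫ g = 0) : ∃ v : M ⟶ X₁, v ≫ f = u := by
  have hmem : ∀ x : X₁, f.hom x ∈ LinearMap.ker g.hom := fun x => by
    rw [LinearMap.mem_ker]
    have := congrArg (fun φ => φ.hom x) hfg; simpa using this
  have hmem' : ∀ m : M, u.hom m ∈ LinearMap.ker g.hom := fun m => by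
    rw [LinearMap.mem_ker]
    have := congrArg (fun φ => φ.hom m) hu; simpa using this
  let K : ModuleCat.{u} A := ModuleCat.of A (LinearMap.ker g.hom)
  let ι : K ⟶ X₂ := ModuleCat.ofHom (LinearMap.ker g.hom).subtype
  let f' : X₁ ⟶ K := ModuleCat.ofHom (LinearMap.codRestrict (LinearMap.ker g.hom) f.hom hmem)
  let u' : M ⟶ K := ModuleCat.ofHom (LinearMap.codRestrict (LinearMap.ker g.hom) u.hom hmem')
  have hepi : Epi f' := (ModuleCat.epi_iff_surjective _).2 (by
    rintro ⟨x₂, hx₂⟩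
    obtain ⟨x₁, hx₁⟩ := hex x₂ hx₂
    exact ⟨x₁, Subtype.ext hx₁⟩)
  refine ⟨Projective.factorThru u' f', ?_⟩
  have h1 : f' ≫ ι = f := rfl
  have h2 : u' ≫ ι = u := rfl
  rw [← h1, ← Category.assoc, Projective.factorThru_comp, h2]

/-- elementwise exactness of `X i ⟶ cycles j ⟶ homology j`. -/
lemma exact_toCycles_homologyπ (K : HomologicalComplex (ModuleCat.{u} A) (ComplexShape.up ℤ))
    (i j : ℤ) (hi : (ComplexShape.up ℤ).prev j = i)
    (x : K.cycles j) (hx : K.homologyπ j x = 0) : ∃ y, K.toCycles i j y = x := by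
  have hex : (ShortComplex.mk (K.toCycles i j) (K.homologyπ j)
      (K.toCycles_comp_homologyπ i j)).Exact :=
    ShortComplex.exact_of_g_is_cokernel _ (K.homologyIsCokernel i j hi)
  exact ((ShortComplex.moduleCat_exact_iff _).1 hex) x hx

/-- lift a morphism to cycles vanishing in homology, through the boundaries, with proj source. -/
lemma lift_cycles_of_homologyπ_eq_zero
    (K : HomologicalComplex (ModuleCat.{u} A) (ComplexShape.up ℤ))
    (i j : ℤ) (hi : (ComplexShape.up ℤ).prev j = i) {M : ModuleCat.{u} A} [Projective M]
    (u : M ⟶ K.cycles j) (hu : u ≫ K.homologyπ j = 0) :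
    ∃ v : M ⟶ K.X i, v ≫ K.toCycles i j = u :=
  lift_of_exact (K.toCycles i j) (K.homologyπ j) (K.toCycles_comp_homologyπ i j)
    (exact_toCycles_homologyπ K i j hi) u hu

/-- lift through the differential when homology vanishes. -/
lemma lift_of_isZero_homology
    (K : HomologicalComplex (ModuleCat.{u} A) (ComplexShape.up ℤ))
    (i j k : ℤ) (hi : (ComplexShape.up ℤ).prev j = i) (hk : (ComplexShape.up ℤ).next j = k)
    (hz : IsZero (K.homology j)) {M : ModuleCat.{u} A} [Projective M]
    (u : M ⟶ K.X j) (hu : u ≫ K.d j k = 0) :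
    ∃ v : M ⟶ K.X i, v ≫ K.d i j = u := by
  obtain ⟨v, hv⟩ := lift_cycles_of_homologyπ_eq_zero K i j hi
    (K.liftCycles u k hk hu) (hz.eq_of_tgt _ _)
  refine ⟨v, ?_⟩
  have := congrArg (fun t => t ≫ K.iCycles j) hv
  simpa using this
section Step1
variable (S : CochainComplex (ModuleCat.{u} A) ℤ)

lemma section_of_qis
    (hbounds : ∀ i : ℤ, i ≠ -1 → i ≠ 0 → IsZero (S.X i))
    (hPm : Projective (S.X (-1))) (hP0 : Projective (S.X 0))
    (Z : CochainComplex (ModuleCat.{u} A) ℤ) (p : Z ⟶ S) [QuasiIso p] :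
    ∃ t : S ⟶ Z, Nonempty (Homotopy (t ≫ p) (𝟙 S)) := by
  haveI := hPm; haveI := hP0
  have hd01 : S.d 0 1 = 0 := (hbounds 1 (by decide) (by decide)).eq_of_tgt _ _
  have hdm : S.d (-2) (-1) = 0 := (hbounds (-2) (by decide) (by decide)).eq_of_src _ _
  have hnext : ∀ i : ℤ, (ComplexShape.up ℤ).next i = i + 1 := fun i => CochainComplex.next ℤ i
  have hprev : ∀ i : ℤ, (ComplexShape.up ℤ).prev i = i - 1 := fun i => CochainComplex.prev ℤ i
  let e₀ : S.cycles 0 ≅ S.X 0 := S.iCyclesIso 0 1 (by rw [hnext]; norm_num) hd01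
  haveI : IsIso (S.homologyπ (-1)) := S.isIso_homologyπ (-2) (-1) (by rw [hprev]; norm_num) hdm
  haveI : IsIso (homologyMap p 0) := inferInstance
  haveI : IsIso (homologyMap p (-1)) := inferInstance
  -- construction of t₀
  set γ : S.X 0 ⟶ Z.cycles 0 :=
    Projective.factorThru (e₀.inv ≫ S.homologyπ 0 ≫ inv (homologyMap p 0)) (Z.homologyπ 0) with hγdef
  have hγ : γ ≫ Z.homologyπ 0 = e₀.inv ≫ S.homologyπ 0 ≫ inv (homologyMap p 0) :=
    Projective.factorThru_comp _ _
  set t₀ : S.X 0 ⟶ Z.X 0 := γ ≫ Z.iCycles 0 with ht₀def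
  have ht₀d : t₀ ≫ Z.d 0 1 = 0 := by rw [ht₀def, Category.assoc, Z.iCycles_d, comp_zero]
  -- the homotopy h₀ in degree 0
  have hγa := reassoc_of% hγ
  have claim1 : (t₀ ≫ p.f 0 - 𝟙 (S.X 0)) ≫ e₀.inv ≫ S.homologyπ 0 = 0 := by
    simp only [Preadditive.sub_comp, Category.id_comp, sub_eq_zero, ht₀def, Category.assoc]
    rw [← cyclesMap_i_assoc p 0, S.iCyclesIso_hom_inv_id_assoc 0 1 _ hd01,
      ← homologyπ_naturality p 0, hγa]
    simp
  obtain ⟨h₀, hh₀'⟩ := lift_cycles_of_homologyπ_eq_zero S (-1) 0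
    (by rw [hprev]; norm_num) ((t₀ ≫ p.f 0 - 𝟙 (S.X 0)) ≫ e₀.inv)
    (by rw [Category.assoc, claim1])
  have hh₀ : h₀ ≫ S.d (-1) 0 = t₀ ≫ p.f 0 - 𝟙 (S.X 0) := by
    have := congrArg (fun t => t ≫ S.iCycles 0) hh₀'
    rw [Category.assoc, S.toCycles_i] at this
    rw [this, Category.assoc]
    have : e₀.inv ≫ S.iCycles 0 = 𝟙 _ := S.iCyclesIso_inv_hom_id 0 1 _ hd01
    rw [this, Category.comp_id]
  -- construction of tm1
  have hdγ : (S.d (-1) 0 ≫ γ) ≫ Z.homologyπ 0 = 0 := by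
    rw [Category.assoc, hγ]
    have hde : S.d (-1) 0 ≫ e₀.inv = S.toCycles (-1) 0 := by
      rw [← cancel_mono (S.iCycles 0), Category.assoc]
      have : e₀.inv ≫ S.iCycles 0 = 𝟙 _ := S.iCyclesIso_inv_hom_id 0 1 _ hd01
      rw [this, Category.comp_id, S.toCycles_i]
    rw [← Category.assoc, hde]
    simp
  obtain ⟨tm1p, ht'⟩ := lift_cycles_of_homologyπ_eq_zero Z (-1) 0
    (by rw [hprev]; norm_num) (S.d (-1) 0 ≫ γ) hdγ
  have htpd : tm1p ≫ Z.d (-1) 0 = S.d (-1) 0 ≫ t₀ := by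
    have := congrArg (fun t => t ≫ Z.iCycles 0) ht'
    rw [Category.assoc, Z.toCycles_i] at this
    rw [this, ht₀def, Category.assoc]
  set e : S.X (-1) ⟶ S.X (-1) := tm1p ≫ p.f (-1) - 𝟙 _ - S.d (-1) 0 ≫ h₀ with hedef
  have he_d : e ≫ S.d (-1) 0 = 0 := by
    rw [hedef]
    simp only [Preadditive.sub_comp, Category.id_comp, Category.assoc]
    rw [p.comm (-1) 0]
    rw [← Category.assoc, htpd, Category.assoc, hh₀]
    simp [Preadditive.comp_sub]
  set ehat : S.X (-1) ⟶ S.cycles (-1) := S.liftCycles e 0 (by rw [hnext]; norm_num) he_d with hehatdef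
  set n : S.X (-1) ⟶ Z.cycles (-1) :=
    Projective.factorThru (ehat ≫ S.homologyπ (-1) ≫ inv (homologyMap p (-1))) (Z.homologyπ (-1))
    with hndef
  have hn : n ≫ Z.homologyπ (-1) = ehat ≫ S.homologyπ (-1) ≫ inv (homologyMap p (-1)) :=
    Projective.factorThru_comp _ _
  set tm1 : S.X (-1) ⟶ Z.X (-1) := tm1p - n ≫ Z.iCycles (-1) with htm1def
  have htm1d : tm1 ≫ Z.d (-1) 0 = S.d (-1) 0 ≫ t₀ := by
    rw [htm1def, Preadditive.sub_comp, htpd, Category.assoc, Z.iCycles_d, comp_zero, sub_zero]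
  have final : tm1 ≫ p.f (-1) - 𝟙 _ - S.d (-1) 0 ≫ h₀ = 0 := by
    have h2 : tm1 ≫ p.f (-1) - 𝟙 _ - S.d (-1) 0 ≫ h₀
        = (ehat - n ≫ cyclesMap p (-1)) ≫ S.iCycles (-1) := by
      have hic : Z.iCycles (-1) ≫ p.f (-1) = cyclesMap p (-1) ≫ S.iCycles (-1) :=
        (cyclesMap_i p (-1)).symm
      have he : ehat ≫ S.iCycles (-1) = e := S.liftCycles_i _ _ _ _
      rw [htm1def]
      simp only [Preadditive.sub_comp, Category.assoc, hic, he, hedef]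
      abel
    rw [h2]
    have h3 : ehat - n ≫ cyclesMap p (-1) = 0 := by
      have hna := reassoc_of% hn
      rw [← cancel_mono (S.homologyπ (-1))]
      simp only [Preadditive.sub_comp, Category.assoc, zero_comp]
      rw [← homologyπ_naturality p (-1), hna]
      simp
    rw [h3, zero_comp]
  -- assemble the chain map
  let tf : ∀ i : ℤ, S.X i ⟶ Z.X i := fun i =>
    if h : i = 0 then (S.XIsoOfEq h).hom ≫ t₀ ≫ (Z.XIsoOfEq h).inv
    else if h' : i = -1 then (S.XIsoOfEq h').hom ≫ tm1 ≫ (Z.XIsoOfEq h').inv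
    else 0
  have tf0 : tf 0 = t₀ := by simp [tf]
  have tfm1 : tf (-1) = tm1 := by norm_num [tf]
  have tfz : ∀ i, i ≠ 0 → i ≠ -1 → tf i = 0 := fun i h h' => by simp [tf, h, h']
  refine ⟨{ f := tf, comm' := ?_ }, ?_⟩
  · intro i j hij
    have hij' : i + 1 = j := hij
    by_cases h0 : i = 0
    · obtain rfl : j = 1 := by omega
      subst h0
      rw [tf0, tfz 1 (by norm_num) (by norm_num), ht₀d, comp_zero]
    · by_cases h1 : i = -1
      · obtain rfl : j = 0 := by omega
        subst h1
        rw [tfm1, tf0, htm1d]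
      · exact (hbounds i h1 h0).eq_of_src _ _
  · let homf : ∀ i j : ℤ, S.X i ⟶ S.X j := fun i j =>
      if hij : i = 0 ∧ j = -1 then (S.XIsoOfEq hij.1).hom ≫ h₀ ≫ (S.XIsoOfEq hij.2).inv else 0
    have homf0m1 : homf 0 (-1) = h₀ := by simp [homf]
    have homfz : ∀ i j, ¬(i = 0 ∧ j = -1) → homf i j = 0 := fun i j h => dif_neg h
    have rel01 : (ComplexShape.up ℤ).Rel 0 1 := by simp
    have relm10 : (ComplexShape.up ℤ).Rel (-1) 0 := by simp
    have relm2m1 : (ComplexShape.up ℤ).Rel (-2) (-1) := by simp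
    refine ⟨{ hom := homf, zero := ?_, comm := ?_ }⟩
    · intro i j hnr
      refine homfz i j ?_
      rintro ⟨rfl, rfl⟩
      exact hnr relm10
    · intro i
      by_cases h0 : i = 0
      · subst h0
        rw [dNext_eq homf rel01, prevD_eq homf relm10, homf0m1,
          homfz 1 0 (by norm_num)]
        dsimp [tf]
        rw [hd01]
        simp only [zero_comp, comp_zero, zero_add, XIsoOfEq_rfl, Iso.refl_hom, Iso.refl_inv,
          Category.id_comp, Category.comp_id]
        rw [hh₀]
        abel
      · by_cases h1 : i = -1
        · subst h1
          rw [dNext_eq homf relm10, prevD_eq homf relm2m1, homf0m1,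
            homfz (-1) (-2) (by norm_num)]
          dsimp [tf]
          norm_num [XIsoOfEq_rfl]
          rw [sub_sub, sub_eq_zero] at final
          rw [final]
          abel
        · exact ((hbounds i h1 h0).eq_of_src _ _)
end Step1

section Fractions
open DerivedCategory

variable [HasDerivedCategory.{w} (ModuleCat.{u} A)]

instance : (HomotopyCategory.quasiIso (ModuleCat.{u} A)
    (ComplexShape.up ℤ)).HasRightCalculusOfFractions := by
  rw [HomotopyCategory.quasiIso_eq_subcategoryAcyclic_W]
  infer_instance

variable (S : CochainComplex (ModuleCat.{u} A) ℤ)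
  (hbounds : ∀ i : ℤ, i ≠ -1 → i ≠ 0 → IsZero (S.X i))
  (hPm : Projective (S.X (-1))) (hP0 : Projective (S.X 0))

include hbounds hPm hP0 in
lemma exists_chainMap (Y : CochainComplex (ModuleCat.{u} A) ℤ)
    (f : Q.obj S ⟶ Q.obj Y) :
    ∃ g : S ⟶ Y, f = Q.map g := by
  set η := DerivedCategory.quotientCompQhIso (ModuleCat.{u} A) with hη
  set f' : Qh.obj ((HomotopyCategory.quotient _ _).obj S) ⟶
      Qh.obj ((HomotopyCategory.quotient _ _).obj Y) :=
    η.hom.app S ≫ f ≫ η.inv.app Y with hf'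
  obtain ⟨φ, hφ⟩ := Localization.exists_rightFraction Qh
    (HomotopyCategory.quasiIso (ModuleCat.{u} A) (ComplexShape.up ℤ)) f'
  obtain ⟨Z', s, hs, g', rfl⟩ := φ.cases
  obtain ⟨Z⟩ := Z'
  obtain ⟨s₀, rfl⟩ := (HomotopyCategory.quotient _ _).map_surjective s
  obtain ⟨g₀, rfl⟩ := (HomotopyCategory.quotient _ _).map_surjective g'
  haveI : QuasiIso s₀ := by
    rw [← HomologicalComplex.mem_quasiIso_iff,
      ← HomotopyCategory.quotient_map_mem_quasiIso_iff]
    exact hs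
  obtain ⟨t, ⟨H⟩⟩ := section_of_qis S hbounds hPm hP0 Z s₀
  have hts : (HomotopyCategory.quotient _ _).map t ≫
      (HomotopyCategory.quotient _ _).map s₀ = 𝟙 _ := by
    rw [← Functor.map_comp, HomotopyCategory.eq_of_homotopy _ _ H, CategoryTheory.Functor.map_id]
  have hf'2 : f' = Qh.map ((HomotopyCategory.quotient _ _).map (t ≫ g₀)) := by
    have h1 := MorphismProperty.RightFraction.map_s_comp_map
      (MorphismProperty.RightFraction.mk ((HomotopyCategory.quotient _ _).map s₀) hs
        ((HomotopyCategory.quotient _ _).map g₀)) Qh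
      (Localization.inverts Qh (HomotopyCategory.quasiIso (ModuleCat.{u} A) (ComplexShape.up ℤ)))
    dsimp at h1
    calc f' = (Qh.map ((HomotopyCategory.quotient _ _).map t) ≫
          Qh.map ((HomotopyCategory.quotient _ _).map s₀)) ≫ f' := by
          rw [← Qh.map_comp, hts, Qh.map_id, Category.id_comp]
      _ = Qh.map ((HomotopyCategory.quotient _ _).map t) ≫
          Qh.map ((HomotopyCategory.quotient _ _).map g₀) := by
          rw [Category.assoc, hφ]
          exact congrArg (Qh.map ((HomotopyCategory.quotient _ _).map t) ≫ ·) h1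
      _ = _ := by rw [← Qh.map_comp, ← Functor.map_comp]
  refine ⟨t ≫ g₀, ?_⟩
  have hnat := η.hom.naturality (t ≫ g₀)
  dsimp at hnat
  have hf : f = η.inv.app S ≫ f' ≫ η.hom.app Y := by
    rw [hf']
    simp
  rw [hf, hf'2, hnat]
  simp

include hbounds hPm hP0 in
lemma homotopy_of_Q_map_eq (Y : CochainComplex (ModuleCat.{u} A) ℤ)
    (g₁ g₂ : S ⟶ Y) (h : Q.map g₁ = Q.map g₂) : Nonempty (Homotopy g₁ g₂) := by
  set η := DerivedCategory.quotientCompQhIso (ModuleCat.{u} A) with hη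
  have h1 : Qh.map ((HomotopyCategory.quotient _ _).map g₁)
      = Qh.map ((HomotopyCategory.quotient _ _).map g₂) := by
    have n1 := η.hom.naturality g₁
    have n2 := η.hom.naturality g₂
    dsimp at n1 n2
    have : (η.hom.app S ≫ Q.map g₁) ≫ η.inv.app Y
        = (η.hom.app S ≫ Q.map g₂) ≫ η.inv.app Y := by rw [h]
    rw [← n1, ← n2] at this
    simpa using this
  rw [MorphismProperty.map_eq_iff_precomp Qh
    (HomotopyCategory.quasiIso (ModuleCat.{u} A) (ComplexShape.up ℤ))] at h1
  obtain ⟨Z', s, hs, hc⟩ := h1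
  obtain ⟨Z⟩ := Z'
  obtain ⟨s₀, rfl⟩ := (HomotopyCategory.quotient _ _).map_surjective s
  haveI : QuasiIso s₀ := by
    rw [← HomologicalComplex.mem_quasiIso_iff,
      ← HomotopyCategory.quotient_map_mem_quasiIso_iff]
    exact hs
  obtain ⟨t, ⟨H⟩⟩ := section_of_qis S hbounds hPm hP0 Z s₀
  have hts : (HomotopyCategory.quotient _ _).map t ≫
      (HomotopyCategory.quotient _ _).map s₀ = 𝟙 _ := by
    rw [← Functor.map_comp, HomotopyCategory.eq_of_homotopy _ _ H, CategoryTheory.Functor.map_id]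
  have : (HomotopyCategory.quotient _ _).map g₁ = (HomotopyCategory.quotient _ _).map g₂ := by
    calc (HomotopyCategory.quotient _ _).map g₁
        = ((HomotopyCategory.quotient _ _).map t ≫ (HomotopyCategory.quotient _ _).map s₀) ≫
          (HomotopyCategory.quotient _ _).map g₁ := by rw [hts, Category.id_comp]
      _ = ((HomotopyCategory.quotient _ _).map t ≫ (HomotopyCategory.quotient _ _).map s₀) ≫
          (HomotopyCategory.quotient _ _).map g₂ := by
          rw [Category.assoc, Category.assoc]
          exact congrArg ((HomotopyCategory.quotient _ _).map t ≫ ·) hc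
      _ = _ := by rw [hts, Category.id_comp]
  exact ⟨HomotopyCategory.homotopyOfEq _ _ this⟩

end Fractions

section LemC
variable (S : CochainComplex (ModuleCat.{u} A) ℤ)
  (hbounds : ∀ i : ℤ, i ≠ -1 → i ≠ 0 → IsZero (S.X i))
  (hPm : Projective (S.X (-1))) (hP0 : Projective (S.X 0))

include hbounds hPm hP0 in
lemma nullhomotopic_iff_surjective
    (W : CochainComplex (ModuleCat.{u} A) ℤ) (hW0 : IsZero (W.homology 0)) :
    (∀ g : S ⟶ W, Nonempty (Homotopy g 0)) ↔
      Surjective (fun g : S.X 0 ⟶ W.homology (-1) => S.d (-1) 0 ≫ g) := by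
  haveI := hPm; haveI := hP0
  have hd01 : S.d 0 1 = 0 := (hbounds 1 (by decide) (by decide)).eq_of_tgt _ _
  have hdm2 : S.d (-2) (-1) = 0 := (hbounds (-2) (by decide) (by decide)).eq_of_src _ _
  have hnext : ∀ i : ℤ, (ComplexShape.up ℤ).next i = i + 1 := fun i => CochainComplex.next ℤ i
  have hprev : ∀ i : ℤ, (ComplexShape.up ℤ).prev i = i - 1 := fun i => CochainComplex.prev ℤ i
  have rel01 : (ComplexShape.up ℤ).Rel 0 1 := by simp
  have relm10 : (ComplexShape.up ℤ).Rel (-1) 0 := by simp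
  have relm2m1 : (ComplexShape.up ℤ).Rel (-2) (-1) := by simp
  constructor
  · intro hnull g
    set gt : S.X (-1) ⟶ W.cycles (-1) := Projective.factorThru g (W.homologyπ (-1)) with hgtdef
    have hgt : gt ≫ W.homologyπ (-1) = g := Projective.factorThru_comp _ _
    let ff : ∀ i : ℤ, S.X i ⟶ W.X i := fun i =>
      if h : i = -1 then (S.XIsoOfEq h).hom ≫ (gt ≫ W.iCycles (-1)) ≫ (W.XIsoOfEq h).inv
      else 0
    have ffm1 : ff (-1) = gt ≫ W.iCycles (-1) := by norm_num [ff]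
    have ffz : ∀ i, i ≠ -1 → ff i = 0 := fun i h => dif_neg h
    have hfc : ∀ (i j : ℤ), (ComplexShape.up ℤ).Rel i j → ff i ≫ W.d i j = S.d i j ≫ ff j := by
      intro i j hij
      have hij' : i + 1 = j := hij
      by_cases h1 : i = -1
      · obtain rfl : j = 0 := by omega
        subst h1
        rw [ffm1, ffz 0 (by norm_num), comp_zero, Category.assoc, W.iCycles_d, comp_zero]
      · rw [ffz i h1, zero_comp]
        by_cases h2 : j = -1
        · subst h2
          obtain rfl : i = -2 := by omega
          rw [hdm2, zero_comp]
        · rw [ffz j h2, comp_zero]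
    obtain ⟨h⟩ := hnull { f := ff, comm' := hfc }
    have hk0 : h.hom 0 (-1) ≫ W.d (-1) 0 = 0 := by
      have hc := h.comm 0
      rw [dNext_eq h.hom rel01, prevD_eq h.hom relm10] at hc
      simp only [HomologicalComplex.zero_f_apply, add_zero, hd01, zero_comp, zero_add] at hc
      rw [show ff 0 = 0 from ffz 0 (by norm_num)] at hc
      exact hc.symm
    have hcm1 : gt ≫ W.iCycles (-1)
        = S.d (-1) 0 ≫ h.hom 0 (-1) + h.hom (-1) (-2) ≫ W.d (-2) (-1) := by
      have hc := h.comm (-1)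
      rw [dNext_eq h.hom relm10, prevD_eq h.hom relm2m1] at hc
      simp only [HomologicalComplex.zero_f_apply, add_zero] at hc
      rw [show ff (-1) = gt ≫ W.iCycles (-1) from ffm1] at hc
      exact hc
    have hbd : (h.hom (-1) (-2) ≫ W.d (-2) (-1)) ≫ W.d (-1) 0 = 0 := by
      rw [Category.assoc, W.d_comp_d, comp_zero]
    have e1 : S.d (-1) 0 ≫ W.liftCycles (h.hom 0 (-1)) 0 (by rw [hnext]; norm_num) hk0
        = gt - W.liftCycles (h.hom (-1) (-2) ≫ W.d (-2) (-1)) 0 (by rw [hnext]; norm_num) hbd := by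
      rw [← cancel_mono (W.iCycles (-1))]
      simp only [Category.assoc, W.liftCycles_i, Preadditive.sub_comp]
      rw [hcm1]
      abel
    refine ⟨W.liftCycles (h.hom 0 (-1)) 0 (by rw [hnext]; norm_num) hk0 ≫ W.homologyπ (-1), ?_⟩
    dsimp only
    rw [← Category.assoc, e1, Preadditive.sub_comp, hgt,
      W.liftCycles_homologyπ_eq_zero_of_boundary _ 0 _ (h.hom (-1) (-2)) rfl, sub_zero]
  · intro hsurj f
    have hf01 : f.f 0 ≫ W.d 0 1 = 0 := by rw [f.comm 0 1, hd01, zero_comp]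
    obtain ⟨k, hk⟩ := lift_of_isZero_homology W (-1) 0 1 (by rw [hprev]; norm_num)
      (by rw [hnext]; norm_num) hW0 (f.f 0) hf01
    have hw : (f.f (-1) - S.d (-1) 0 ≫ k) ≫ W.d (-1) 0 = 0 := by
      rw [Preadditive.sub_comp, f.comm (-1) 0, Category.assoc, hk, sub_self]
    set what : S.X (-1) ⟶ W.cycles (-1) :=
      W.liftCycles (f.f (-1) - S.d (-1) 0 ≫ k) 0 (by rw [hnext]; norm_num) hw with hwhatdef
    obtain ⟨g', hg'⟩ := hsurj (what ≫ W.homologyπ (-1))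
    have hg'' : S.d (-1) 0 ≫ g' = what ≫ W.homologyπ (-1) := hg'
    set gt' : S.X 0 ⟶ W.cycles (-1) := Projective.factorThru g' (W.homologyπ (-1)) with hgt'def
    have hgt' : gt' ≫ W.homologyπ (-1) = g' := Projective.factorThru_comp _ _
    have hδ : (what - S.d (-1) 0 ≫ gt') ≫ W.homologyπ (-1) = 0 := by
      rw [Preadditive.sub_comp, Category.assoc, hgt', hg'', sub_self]
    obtain ⟨m, hm⟩ := lift_cycles_of_homologyπ_eq_zero W (-2) (-1) (by rw [hprev]; norm_num)
      (what - S.d (-1) 0 ≫ gt') hδ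
    let homf : ∀ i j : ℤ, S.X i ⟶ W.X j := fun i j =>
      if hij : i = 0 ∧ j = -1 then
        (S.XIsoOfEq hij.1).hom ≫ (k + gt' ≫ W.iCycles (-1)) ≫ (W.XIsoOfEq hij.2).inv
      else if hij' : i = -1 ∧ j = -2 then
        (S.XIsoOfEq hij'.1).hom ≫ m ≫ (W.XIsoOfEq hij'.2).inv
      else 0
    have homf0m1 : homf 0 (-1) = k + gt' ≫ W.iCycles (-1) := by norm_num [homf]
    have homfm1m2 : homf (-1) (-2) = m := by norm_num [homf]
    have homfz : ∀ i j, ¬(i = 0 ∧ j = -1) → ¬(i = -1 ∧ j = -2) → homf i j = 0 := by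
      intro i j h1 h2
      rw [show homf i j = _ from dif_neg h1, dif_neg h2]
    refine ⟨{ hom := homf, zero := ?_, comm := ?_ }⟩
    · intro i j hnr
      refine homfz i j ?_ ?_
      · rintro ⟨rfl, rfl⟩; exact hnr relm10
      · rintro ⟨rfl, rfl⟩; exact hnr relm2m1
    · intro i
      by_cases h0 : i = 0
      · subst h0
        rw [dNext_eq homf rel01, prevD_eq homf relm10, homf0m1,
          homfz 1 0 (by norm_num) (by norm_num), hd01]
        simp only [HomologicalComplex.zero_f_apply, add_zero, zero_comp, zero_add,
          Preadditive.add_comp, Category.assoc, W.iCycles_d, comp_zero, hk]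
      · by_cases h1 : i = -1
        · subst h1
          rw [dNext_eq homf relm10, prevD_eq homf relm2m1, homf0m1, homfm1m2]
          have hmd : m ≫ W.d (-2) (-1)
              = (f.f (-1) - S.d (-1) 0 ≫ k) - S.d (-1) 0 ≫ gt' ≫ W.iCycles (-1) := by
            have := congrArg (fun t => t ≫ W.iCycles (-1)) hm
            rw [Category.assoc, W.toCycles_i] at this
            rw [this, Preadditive.sub_comp, hwhatdef, W.liftCycles_i, Category.assoc]
          simp only [HomologicalComplex.zero_f_apply, add_zero, Preadditive.comp_add, hmd]
          abel
        · exact (hbounds i h1 h0).eq_of_src _ _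
end LemC

section Final
open DerivedCategory

variable [HasDerivedCategory.{w} (ModuleCat.{u} A)]
variable (S : CochainComplex (ModuleCat.{u} A) ℤ)
  (hbounds : ∀ i : ℤ, i ≠ -1 → i ≠ 0 → IsZero (S.X i))
  (hPm : Projective (S.X (-1))) (hP0 : Projective (S.X 0))

omit hbounds hPm hP0 in
lemma Q_map_eq_zero_of_homotopy (Y : CochainComplex (ModuleCat.{u} A) ℤ)
    (g : S ⟶ Y) (H : Homotopy g 0) : Q.map g = 0 := by
  set η := DerivedCategory.quotientCompQhIso (ModuleCat.{u} A) with hη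
  have h0 : (HomotopyCategory.quotient _ _).map g = 0 := by
    rw [HomotopyCategory.eq_of_homotopy _ _ H, Functor.map_zero]
  have hnat := η.hom.naturality g
  dsimp at hnat
  rw [h0, Functor.map_zero, zero_comp] at hnat
  rw [← cancel_epi (η.hom.app S), ← hnat, comp_zero]

include hbounds hPm hP0 in
lemma part1 (X : CochainComplex (ModuleCat.{u} A) ℤ)
    (hX1 : IsZero (X.homology 1)) :
    (∀ f : Q.obj S ⟶ (Q.obj X)⟦(1:ℤ)⟧, f = 0) ↔
      Surjective (fun g : S.X 0 ⟶ X.homology 0 => S.d (-1) 0 ≫ g) := by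
  have e₁ : Q.obj ((CategoryTheory.shiftFunctor (CochainComplex (ModuleCat.{u} A) ℤ) (1:ℤ)).obj X)
      ≅ (Q.obj X)⟦(1:ℤ)⟧ := (Q.commShiftIso (1:ℤ)).app X
  have sh0 : ((X⟦(1:ℤ)⟧ : CochainComplex (ModuleCat.{u} A) ℤ)).homology 0 ≅ X.homology 1 :=
    (((HomologicalComplex.homologyFunctor (ModuleCat.{u} A) (ComplexShape.up ℤ) 0).shiftIso
      (1:ℤ) 0 1 (by norm_num)).app X)
  have shm1 : ((X⟦(1:ℤ)⟧ : CochainComplex (ModuleCat.{u} A) ℤ)).homology (-1) ≅ X.homology 0 :=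
    (((HomologicalComplex.homologyFunctor (ModuleCat.{u} A) (ComplexShape.up ℤ) 0).shiftIso
      (1:ℤ) (-1) 0 (by norm_num)).app X)
  have hW0 : IsZero ((X⟦(1:ℤ)⟧ : CochainComplex (ModuleCat.{u} A) ℤ).homology 0) :=
    hX1.of_iso sh0
  calc (∀ f : Q.obj S ⟶ (Q.obj X)⟦(1:ℤ)⟧, f = 0)
      ↔ (∀ f : Q.obj S ⟶ Q.obj (X⟦(1:ℤ)⟧), f = 0) := (forall_eq_zero_iff e₁).symm
    _ ↔ (∀ g : S ⟶ X⟦(1:ℤ)⟧, Nonempty (Homotopy g 0)) := by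
        constructor
        · intro hz g
          exact homotopy_of_Q_map_eq S hbounds hPm hP0 _ g 0 (by rw [hz (Q.map g), Functor.map_zero])
        · intro hnull f
          obtain ⟨g, rfl⟩ := exists_chainMap S hbounds hPm hP0 _ f
          obtain ⟨H⟩ := hnull g
          exact Q_map_eq_zero_of_homotopy S _ g H
    _ ↔ Surjective (fun g : S.X 0 ⟶ (X⟦(1:ℤ)⟧ :
          CochainComplex (ModuleCat.{u} A) ℤ).homology (-1) => S.d (-1) 0 ≫ g) :=
        nullhomotopic_iff_surjective S hbounds hPm hP0 _ hW0
    _ ↔ Surjective (fun g : S.X 0 ⟶ X.homology 0 => S.d (-1) 0 ≫ g) :=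
        surjective_comp_iff_iso _ shm1

end Final

end Stmt17Aux

open DerivedCategory in
/-- For a two-term complex `σ` of projectives (in degrees `-1, 0`) and a complex `X` with
`H^i(X) = 0` for `i > 0`: `Hom_{D(A)}(σ, X[1]) = 0` iff `H^0(X) ∈ 𝒟_σ`; in particular
`𝒟_σ` is the class of modules `N` with `Hom_{D(A)}(σ, N[1]) = 0`. -/
theorem stmt_17 [HasDerivedCategory.{w} (ModuleCat.{u} A)]
    (S : CochainComplex (ModuleCat.{u} A) ℤ)
    (hbounds : ∀ i : ℤ, i ≠ -1 → i ≠ 0 → IsZero (S.X i))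
    (hPm : Projective (S.X (-1))) (hP0 : Projective (S.X 0))
    (X : CochainComplex (ModuleCat.{u} A) ℤ)
    (hX : ∀ i : ℤ, 0 < i → IsZero (X.homology i)) :
    ((∀ f : Q.obj S ⟶ (Q.obj X)⟦(1 : ℤ)⟧, f = 0) ↔
      Surjective (fun g : S.X 0 ⟶ X.homology 0 => S.d (-1) 0 ≫ g)) ∧
    (∀ N : ModuleCat.{u} A,
      (∀ f : Q.obj S ⟶
          (Q.obj ((HomologicalComplex.single (ModuleCat.{u} A)
            (ComplexShape.up ℤ) 0).obj N))⟦(1 : ℤ)⟧, f = 0) ↔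
      Surjective (fun g : S.X 0 ⟶ N => S.d (-1) 0 ≫ g)) := by
  constructor
  · exact Stmt17Aux.part1 S hbounds hPm hP0 X (hX 1 one_pos)
  · intro N
    rw [Stmt17Aux.part1 S hbounds hPm hP0
      ((HomologicalComplex.single (ModuleCat.{u} A) (ComplexShape.up ℤ) 0).obj N)
      (HomologicalComplex.isZero_single_obj_homology (ComplexShape.up ℤ) 0 N 1 (by norm_num))]
    exact Stmt17Aux.surjective_comp_iff_iso _
      (HomologicalComplex.singleObjHomologySelfIso (ComplexShape.up ℤ) 0 N)
end

section
/- Let σ: P₋₁ → P₀ be a two-term complex of projective A-modules with T = H^0(σ) = coker(σ), and let X be a complex with H^i(X) = 0 for all i < 0. Then Hom_{D(A)}(σ, X[i]) = 0 for all i ≤ 0 if and only if Hom_A(T, H^0(X)) = 0. -/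
universe u

open CategoryTheory CategoryTheory.Limits Function

variable {A : Type u} [Ring A]

universe w

namespace Stmt18Aux

open HomologicalComplex

lemma projLift {P M N : ModuleCat.{u} A} [Projective P] (g : P ⟶ N) (d : M ⟶ N)
    (h : ∀ p : P, ∃ m : M, d m = g p) : ∃ h0 : P ⟶ M, h0 ≫ d = g := by
  let R : ModuleCat.{u} A := ModuleCat.of A (LinearMap.range d.hom)
  let d' : M ⟶ R := ModuleCat.ofHom d.hom.rangeRestrict
  have hepi : Epi d' := (ModuleCat.epi_iff_surjective _).mpr d.hom.surjective_rangeRestrict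
  let g' : P ⟶ R := ModuleCat.ofHom <| LinearMap.codRestrict (LinearMap.range d.hom) g.hom
    (fun p => by obtain ⟨m, hm⟩ := h p; exact ⟨m, hm⟩)
  let s : R ⟶ N := ModuleCat.ofHom (LinearMap.range d.hom).subtype
  have hd : d' ≫ s = d := by ext m; rfl
  have hg' : g' ≫ s = g := by ext p; rfl
  refine ⟨Projective.factorThru g' d', ?_⟩
  rw [← hd, ← Category.assoc, Projective.factorThru_comp, hg']

lemma exactAt_elem {Y : CochainComplex (ModuleCat.{u} A) ℤ} {i j k : ℤ}
    (hij : i + 1 = j) (hjk : j + 1 = k) (hY : IsZero (Y.homology j)) :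
    ∀ y : Y.X j, Y.d j k y = 0 → ∃ w : Y.X i, Y.d i j w = y := by
  have h := (Y.exactAt_iff_isZero_homology j).mpr hY
  rw [Y.exactAt_iff' i j k (by simp [CochainComplex.prev]; omega)
    (by simp [CochainComplex.next]; omega)] at h
  intro y hy
  exact (ShortComplex.moduleCat_exact_iff _).mp h y hy

lemma shift_exact_elem {X : CochainComplex (ModuleCat.{u} A) ℤ} {i j k l : ℤ}
    (hjk : j + 1 = k) (hkl : k + 1 = l) (h : IsZero (X.homology (k + i))) :
    ∀ y : (X⟦i⟧).X k, (X⟦i⟧).d k l y = 0 → ∃ w : (X⟦i⟧).X j, (X⟦i⟧).d j k w = y := by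
  intro y hy
  have hy' : X.d (k+i) (l+i) y = 0 := by
    have h2 : ((i.negOnePow : ℤ) • X.d (k+i) (l+i)) y = 0 := hy
    have h3 : (((i.negOnePow : ℤ) : ℤ) • ((i.negOnePow : ℤ) • (X.d (k+i) (l+i) y))) = 0 := by
      rw [show ((i.negOnePow : ℤ) • (X.d (k+i) (l+i) y)) =
        ((i.negOnePow : ℤ) • X.d (k+i) (l+i)) y from rfl, h2, smul_zero]
    simpa [smul_smul, Int.units_mul_self] using h3
  obtain ⟨w, hw⟩ := exactAt_elem (i := j + i) (by omega) (by omega) h y hy'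
  refine ⟨(i.negOnePow : ℤ) • w, ?_⟩
  have : ((X⟦i⟧).d j k) ((i.negOnePow : ℤ) • w) =
      (i.negOnePow : ℤ) • (((X⟦i⟧).d j k) w) :=
    map_zsmul ((X⟦i⟧).d j k).hom _ _
  rw [this]
  show (i.negOnePow : ℤ) • (((i.negOnePow : ℤ) • X.d (j+i) (k+i)) w) = y
  show (i.negOnePow : ℤ) • ((i.negOnePow : ℤ) • (X.d (j+i) (k+i) w)) = y
  simp [smul_smul, Int.units_mul_self, hw]
  exact (smul_smul (i.negOnePow : ℤ) (i.negOnePow : ℤ) y).trans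
    (by rw [← Units.val_mul, Int.units_mul_self, Units.val_one, one_smul])

lemma nullHomotopy {S Y : CochainComplex (ModuleCat.{u} A) ℤ}
    (hb : ∀ i : ℤ, i ≠ -1 → i ≠ 0 → IsZero (S.X i)) (hPm : Projective (S.X (-1)))
    (f : S ⟶ Y)
    (hexm1 : ∀ y : Y.X (-1), Y.d (-1) 0 y = 0 → ∃ w : Y.X (-2), Y.d (-2) (-1) w = y)
    (h0 : S.X 0 ⟶ Y.X (-1)) (hh0 : h0 ≫ Y.d (-1) 0 = f.f 0) :
    (HomotopyCategory.quotient (ModuleCat.{u} A) (ComplexShape.up ℤ)).map f = 0 := by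
  haveI := hPm
  suffices ht : Nonempty (Homotopy f 0) by
    obtain ⟨ht⟩ := ht
    rw [HomotopyCategory.eq_of_homotopy f 0 ht, Functor.map_zero]
  have hq : (f.f (-1) - S.d (-1) 0 ≫ h0) ≫ Y.d (-1) 0 = 0 := by
    rw [Preadditive.sub_comp, Category.assoc, hh0, f.comm (-1) 0, sub_self]
  have : ∀ p : S.X (-1), ∃ w : Y.X (-2),
      Y.d (-2) (-1) w = (f.f (-1) - S.d (-1) 0 ≫ h0) p := by
    intro p
    apply hexm1
    exact congrArg (fun φ => φ p) hq
  obtain ⟨hm, hhm⟩ := projLift (f.f (-1) - S.d (-1) 0 ≫ h0) (Y.d (-2) (-1)) this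
  let H : ∀ i j : ℤ, S.X i ⟶ Y.X j := fun i j =>
    if hij : i = 0 ∧ j = -1 then
      (S.XIsoOfEq hij.1).hom ≫ h0 ≫ (Y.XIsoOfEq hij.2.symm).hom
    else if hij' : i = -1 ∧ j = -2 then
      (S.XIsoOfEq hij'.1).hom ≫ hm ≫ (Y.XIsoOfEq hij'.2.symm).hom
    else 0
  have H0 : H 0 (-1) = h0 := by simp [H, XIsoOfEq]
  have Hm : H (-1) (-2) = hm := by norm_num [H, XIsoOfEq]
  have Hz : ∀ i j, ¬(i = 0 ∧ j = -1) → ¬(i = -1 ∧ j = -2) → H i j = 0 := by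
    intro i j h1 h2
    simp only [H, dif_neg h1, dif_neg h2]
  refine ⟨⟨H, ?_, ?_⟩⟩
  · intro i j hij
    simp only [ComplexShape.up_Rel] at hij
    exact Hz i j (by rintro ⟨rfl, rfl⟩; omega) (by rintro ⟨rfl, rfl⟩; omega)
  · intro i
    by_cases hi0 : i = 0
    · subst hi0
      rw [dNext_eq _ (show (ComplexShape.up ℤ).Rel 0 1 by simp),
        prevD_eq _ (show (ComplexShape.up ℤ).Rel (-1) 0 by simp),
        Hz 1 0 (by omega) (by omega), H0]
      simp [hh0]
    · by_cases him : i = -1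
      · subst him
        rw [dNext_eq _ (show (ComplexShape.up ℤ).Rel (-1) 0 by simp),
          prevD_eq _ (show (ComplexShape.up ℤ).Rel (-2) (-1) by simp),
          H0, Hm, hhm]
        simp
      · exact (hb i him hi0).eq_of_src _ _

lemma condC {S Y : CochainComplex (ModuleCat.{u} A) ℤ}
    (h1 : IsZero (S.X 1)) (hP0 : Projective (S.X 0))
    (hex0 : ∀ y : Y.X 0, Y.d 0 1 y = 0 → ∃ w : Y.X (-1), Y.d (-1) 0 w = y)
    (f : S ⟶ Y) : ∃ h0 : S.X 0 ⟶ Y.X (-1), h0 ≫ Y.d (-1) 0 = f.f 0 := by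
  haveI := hP0
  have hf1 : f.f 0 ≫ Y.d 0 1 = 0 := by
    rw [f.comm 0 1, h1.eq_of_src (f.f 1) 0, comp_zero]
  exact projLift (f.f 0) (Y.d (-1) 0)
    (fun p => hex0 (f.f 0 p) (congrArg (fun φ => φ p) hf1))

open DerivedCategory in
lemma vanish [HasDerivedCategory.{w} (ModuleCat.{u} A)]
    {S Y : CochainComplex (ModuleCat.{u} A) ℤ}
    (hb : ∀ i : ℤ, i ≠ -1 → i ≠ 0 → IsZero (S.X i))
    (hPm : Projective (S.X (-1))) (hP0 : Projective (S.X 0))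
    (hexm1 : ∀ y : Y.X (-1), Y.d (-1) 0 y = 0 → ∃ w : Y.X (-2), Y.d (-2) (-1) w = y)
    (hC : ∀ f : S ⟶ Y, ∃ h0 : S.X 0 ⟶ Y.X (-1), h0 ≫ Y.d (-1) 0 = f.f 0)
    (φ : Q.obj S ⟶ Q.obj Y) : φ = 0 := by
  set C := ModuleCat.{u} A
  let W := HomotopyCategory.quasiIso C (ComplexShape.up ℤ)
  haveI : W.HasLeftCalculusOfFractions := by
    rw [show W = (HomotopyCategory.subcategoryAcyclic C).trW from
      HomotopyCategory.quasiIso_eq_trW_subcategoryAcyclic C]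
    infer_instance
  let quot := HomotopyCategory.quotient C (ComplexShape.up ℤ)
  let ψ : Qh.obj (quot.obj S) ⟶ Qh.obj (quot.obj Y) :=
    (quotientCompQhIso C).hom.app S ≫ φ ≫ (quotientCompQhIso C).inv.app Y
  suffices hψ : ψ = 0 by
    have : φ = (quotientCompQhIso C).inv.app S ≫ ψ ≫ (quotientCompQhIso C).hom.app Y := by
      simp [ψ]
    rw [this, hψ, zero_comp, comp_zero]
  obtain ⟨fr, hfr⟩ := Localization.exists_leftFraction Qh W ψ
  have hs : (HomotopyCategory.subcategoryAcyclic C).trW fr.s := by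
    rw [← HomotopyCategory.quasiIso_eq_trW_subcategoryAcyclic C]
    exact fr.hs
  obtain ⟨Z, g, h, hdist, hZ⟩ := hs
  have hZhom : ∀ n : ℤ, IsZero (Z.as.homology n) := by
    intro n
    rw [HomotopyCategory.mem_subcategoryAcyclic_iff] at hZ
    have h2 : IsZero ((HomotopyCategory.homologyFunctor C (ComplexShape.up ℤ) n).obj
        (quot.obj Z.as)) := hZ n
    exact (((HomotopyCategory.homologyFunctorFactors C (ComplexShape.up ℤ) n).app
      Z.as).isZero_iff).mp h2
  have key : ∀ (u : S ⟶ Z.as), quot.map u = 0 := by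
    intro u
    obtain ⟨h0, hh0⟩ := condC (hb 1 (by omega) (by omega)) hP0
      (exactAt_elem (by omega) (by omega) (hZhom 0)) u
    exact nullHomotopy hb hPm u (exactAt_elem (by omega) (by omega) (hZhom (-1))) h0 hh0
  have hfg : fr.f ≫ g = 0 := by
    obtain ⟨u, hu⟩ := quot.map_surjective (show quot.obj S ⟶ quot.obj Z.as from fr.f ≫ g)
    have hu' : quot.map u = fr.f ≫ g := hu
    rw [← hu', key u]; rfl
  obtain ⟨b, hb'⟩ := Pretriangulated.Triangle.coyoneda_exact₂ _ hdist fr.f hfg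
  obtain ⟨v, hv⟩ := quot.map_surjective b
  obtain ⟨h0, hh0⟩ := hC v
  have hv0 : quot.map v = 0 := nullHomotopy hb hPm v hexm1 h0 hh0
  have hb0 : b = 0 := by rw [← hv, hv0]; rfl
  haveI : IsIso (Qh.map fr.s) := Localization.inverts Qh W fr.s fr.hs
  have heq : ψ ≫ Qh.map fr.s = Qh.map fr.f :=
    hfr ▸ fr.map_comp_map_s Qh (Localization.inverts Qh W)
  replace heq : ψ ≫ Qh.map fr.s = 0 := by
    rw [heq, hb', hb0, zero_comp]; exact Qh.map_zero _ _
  have := heq =≫ inv (Qh.map fr.s)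
  simpa using this

lemma boundary_elem {X : CochainComplex (ModuleCat.{u} A) ℤ} {P : ModuleCat.{u} A}
    (c : P ⟶ X.cycles 0) (hc : c ≫ X.homologyπ 0 = 0) :
    ∀ p : P, ∃ w : X.X (-1), X.toCycles (-1) 0 w = c p := by
  have hcok := X.homologyIsCokernel (-1) 0 (by simp [CochainComplex.prev])
  have hex : (ShortComplex.mk (X.toCycles (-1) 0) (X.homologyπ 0)
      (X.toCycles_comp_homologyπ (-1) 0)).Exact :=
    ShortComplex.exact_of_g_is_cokernel _ hcok
  intro p
  exact (ShortComplex.moduleCat_exact_iff _).mp hex (c p) (congrArg (fun φ => φ p) hc)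

lemma hC_of_Tcirc {S X : CochainComplex (ModuleCat.{u} A) ℤ}
    (h1 : IsZero (S.X 1)) (hP0 : Projective (S.X 0))
    (hT : ∀ g : cokernel (S.d (-1) 0) ⟶ X.homology 0, g = 0)
    (v : S ⟶ X) : ∃ h0 : S.X 0 ⟶ X.X (-1), h0 ≫ X.d (-1) 0 = v.f 0 := by
  haveI := hP0
  have hf1 : v.f 0 ≫ X.d 0 1 = 0 := by
    rw [v.comm 0 1, h1.eq_of_src (v.f 1) 0, comp_zero]
  let c : S.X 0 ⟶ X.cycles 0 := X.liftCycles (v.f 0) 1 (by simp [CochainComplex.next]) hf1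
  have hσc : S.d (-1) 0 ≫ c = v.f (-1) ≫ X.toCycles (-1) 0 := by
    rw [← cancel_mono (X.iCycles 0)]
    simp [c, v.comm (-1) 0]
  have hu : S.d (-1) 0 ≫ (c ≫ X.homologyπ 0) = 0 := by
    rw [← Category.assoc, hσc, Category.assoc, X.toCycles_comp_homologyπ, comp_zero]
  have hg := hT (cokernel.desc _ (c ≫ X.homologyπ 0) hu)
  have hu0 : c ≫ X.homologyπ 0 = 0 := by
    rw [← cokernel.π_desc (S.d (-1) 0) (c ≫ X.homologyπ 0) hu, hg, comp_zero]
  obtain ⟨h0, hh0⟩ := projLift c (X.toCycles (-1) 0) (boundary_elem c hu0)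
  refine ⟨h0, ?_⟩
  have ht : X.toCycles (-1) 0 ≫ X.iCycles 0 = X.d (-1) 0 := X.toCycles_i _ _
  rw [← ht, ← Category.assoc, hh0]
  simp [c]

open DerivedCategory in
lemma forward [HasDerivedCategory.{w} (ModuleCat.{u} A)]
    (S : CochainComplex (ModuleCat.{u} A) ℤ)
    (hbounds : ∀ i : ℤ, i ≠ -1 → i ≠ 0 → IsZero (S.X i))
    (hPm : Projective (S.X (-1))) (hP0 : Projective (S.X 0))
    (X : CochainComplex (ModuleCat.{u} A) ℤ)
    (hD : ∀ f : Q.obj S ⟶ Q.obj X, f = 0)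
    (g : cokernel (S.d (-1) 0) ⟶ X.homology 0) : g = 0 := by
  haveI := hP0
  haveI := hPm
  let σ := S.d (-1) 0
  let π := cokernel.π σ
  let c : S.X 0 ⟶ X.cycles 0 := Projective.factorThru (π ≫ g) (X.homologyπ 0)
  have hc : c ≫ X.homologyπ 0 = π ≫ g := Projective.factorThru_comp _ _
  have hσc0 : (σ ≫ c) ≫ X.homologyπ 0 = 0 := by
    rw [Category.assoc, hc, ← Category.assoc, cokernel.condition, zero_comp]
  obtain ⟨fm, hfm⟩ := projLift (σ ≫ c) (X.toCycles (-1) 0) (boundary_elem _ hσc0)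
  let F : ∀ i : ℤ, S.X i ⟶ X.X i := fun i =>
    if hi : i = -1 then (S.XIsoOfEq hi).hom ≫ fm ≫ (X.XIsoOfEq hi.symm).hom
    else if hi0 : i = 0 then
      (S.XIsoOfEq hi0).hom ≫ (c ≫ X.iCycles 0) ≫ (X.XIsoOfEq hi0.symm).hom
    else 0
  have F0 : F 0 = c ≫ X.iCycles 0 := by norm_num [F, XIsoOfEq]
  have Fm : F (-1) = fm := by simp [F, XIsoOfEq]
  have Fz : ∀ i, i ≠ -1 → i ≠ 0 → F i = 0 := fun i h1 h2 => by
    simp only [F, dif_neg h1, dif_neg h2]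
  have comm : ∀ i j, (ComplexShape.up ℤ).Rel i j → F i ≫ X.d i j = S.d i j ≫ F j := by
    intro i j hij
    simp only [ComplexShape.up_Rel] at hij
    by_cases him : i = -1
    · subst him
      have hj : j = 0 := by omega
      subst hj
      rw [Fm, F0, ← X.toCycles_i (-1) 0, ← Category.assoc, hfm, Category.assoc]
    · by_cases hi0 : i = 0
      · subst hi0
        have hj : j = 1 := by omega
        subst hj
        rw [F0, Fz 1 (by omega) (by omega), comp_zero, Category.assoc, X.iCycles_d,
          comp_zero]
      · rw [(hbounds i him hi0).eq_of_src (F i) 0, zero_comp,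
          (hbounds i him hi0).eq_of_src (S.d i j) 0, zero_comp]
  let f : S ⟶ X := ⟨F, comm⟩
  have hQf : Q.map f = 0 := hD _
  -- homologyMap f 0 = 0
  have hH : HomologicalComplex.homologyMap f 0 = 0 := by
    have hnat := (homologyFunctorFactors (ModuleCat.{u} A) 0).hom.naturality f
    have hz : (Q ⋙ homologyFunctor (ModuleCat.{u} A) 0).map f = 0 := by
      show (homologyFunctor (ModuleCat.{u} A) 0).map (Q.map f) = 0
      rw [hQf, Functor.map_zero]
    rw [hz, zero_comp] at hnat
    have := congrArg (fun t => inv ((homologyFunctorFactors (ModuleCat.{u} A) 0).hom.app S) ≫ t)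
      hnat
    exact (cancel_epi ((homologyFunctorFactors (ModuleCat.{u} A) 0).hom.app S)).mp
      (hnat.symm.trans comp_zero.symm)
  have hiC : IsIso (S.iCycles 0) :=
    S.isIso_iCycles 0 1 (by simp [CochainComplex.next])
      ((hbounds 1 (by omega) (by omega)).eq_of_tgt _ _)
  have hcm : HomologicalComplex.cyclesMap f 0 = S.iCycles 0 ≫ c := by
    rw [← cancel_mono (X.iCycles 0), HomologicalComplex.cyclesMap_i, Category.assoc]
    show S.iCycles 0 ≫ F 0 = _
    rw [F0]
  have : π ≫ g = 0 := by
    rw [← hc, ← Category.id_comp c, ← IsIso.inv_hom_id (S.iCycles 0), Category.assoc,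
      Category.assoc, ← Category.assoc (S.iCycles 0), ← hcm,
      ← HomologicalComplex.homologyπ_naturality, hH, comp_zero, comp_zero]
  rw [← cancel_epi π, this, comp_zero]

end Stmt18Aux


open DerivedCategory in
/-- For a two-term complex `σ` of projectives (degrees `-1, 0`) with `T = H⁰(σ) = coker σ`
and a complex `X` with `H^i(X) = 0` for `i < 0`: `Hom_{D(A)}(σ, X[i]) = 0` for all `i ≤ 0`
iff `Hom_A(T, H⁰(X)) = 0`. -/
theorem stmt_18 [HasDerivedCategory.{w} (ModuleCat.{u} A)]
    (S : CochainComplex (ModuleCat.{u} A) ℤ)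
    (hbounds : ∀ i : ℤ, i ≠ -1 → i ≠ 0 → IsZero (S.X i))
    (hPm : Projective (S.X (-1))) (hP0 : Projective (S.X 0))
    (X : CochainComplex (ModuleCat.{u} A) ℤ)
    (hX : ∀ i : ℤ, i < 0 → IsZero (X.homology i)) :
    ((∀ i : ℤ, i ≤ 0 → ∀ f : Q.obj S ⟶ (Q.obj X)⟦i⟧, f = 0) ↔
      (∀ g : cokernel (S.d (-1) 0) ⟶ X.homology 0, g = 0)) := by
  constructor
  · intro hD g
    refine Stmt18Aux.forward S hbounds hPm hP0 X (fun f => ?_) g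
    have h1 := hD 0 le_rfl
      (f ≫ ((shiftFunctorZero (DerivedCategory (ModuleCat.{u} A)) ℤ).app (Q.obj X)).inv)
    rw [← cancel_mono (((shiftFunctorZero (DerivedCategory (ModuleCat.{u} A)) ℤ).app
      (Q.obj X)).inv), h1, zero_comp]
  · intro hT i hi f
    rcases eq_or_lt_of_le hi with h0 | hneg
    · subst h0
      have hv : f ≫ ((shiftFunctorZero (DerivedCategory (ModuleCat.{u} A)) ℤ).app
          (Q.obj X)).hom = 0 := by
        refine Stmt18Aux.vanish hbounds hPm hP0
          (Stmt18Aux.exactAt_elem (by omega) (by omega) (hX (-1) (by omega)))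
          (Stmt18Aux.hC_of_Tcirc (hbounds 1 (by omega) (by omega)) hP0 hT) _
      rw [← cancel_mono (((shiftFunctorZero (DerivedCategory (ModuleCat.{u} A)) ℤ).app
        (Q.obj X)).hom), hv, zero_comp]
    · have hv : f ≫ (Q.commShiftIso i).inv.app X = 0 := by
        refine Stmt18Aux.vanish hbounds hPm hP0 (Y := X⟦i⟧)
          (Stmt18Aux.shift_exact_elem (by omega) (by omega) (hX (-1 + i) (by omega)))
          (fun v => Stmt18Aux.condC (hbounds 1 (by omega) (by omega)) hP0
            (Stmt18Aux.shift_exact_elem (by omega) (by omega) (hX (0 + i) (by omega))) v) _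
      rw [← cancel_mono ((Q.commShiftIso i).inv.app X), hv, zero_comp]
end
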